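/- arXiv:2002.07256 — 5 statements merged into one kernel-verified Lean document; each statement's English description precedes it below -/
import Mathlib

section
/- Let k ≥ 2 be a natural number and let S ⊆ ℕ be a k-automatic set such that the density of S exists, i.e., the limit lim_{N→∞} π_S(N)/N exists. Then this limit is a rational number. -/
open Filter

/-- A sequence `h : ℕ → Δ` is `k`-automatic if there is a DFAO (finite state set `Q`,
initial state `q₀`, transition function `δ`, output function `τ`) computing `h n` by
reading the base-`k` digits of `n` from the most significant digit to the least. -/
def IsAutomaticSeq {Δ : Type*} (k : ℕ) (h : ℕ → Δ) : Prop :=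
  ∃ (Q : Type) (_ : Fintype Q) (q₀ : Q) (δ : Q → ℕ → Q) (τ : Q → Δ),
    ∀ n : ℕ, h n = τ (((Nat.digits k n).reverse).foldl δ q₀)

/-- A set `S ⊆ ℕ` is `k`-automatic if its characteristic function is `k`-automatic. -/
def IsAutomaticSet (k : ℕ) (S : Set ℕ) : Prop :=
  IsAutomaticSeq k (S.indicator fun _ => (1 : ℕ))

/-- `piCount S N` is the number of elements of `S` that are less than `N`. -/
noncomputable def piCount (S : Set ℕ) (N : ℕ) : ℕ := (S ∩ Set.Iio N).ncard

section Aux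
open Polynomial Matrix

set_option linter.unusedSectionVars false


noncomputable def shiftApply {R : Type*} [CommRing R] [Algebra ℚ R] (r : ℚ[X]) (x : ℕ → R) : ℕ → R :=
  fun n => r.sum fun i a => algebraMap ℚ R a * x (n + i)

variable {R : Type*} [CommRing R] [Algebra ℚ R]

lemma shiftApply_monomial (i : ℕ) (a : ℚ) (x : ℕ → R) (n : ℕ) :
    shiftApply (monomial i a) x n = algebraMap ℚ R a * x (n + i) := by
  unfold shiftApply
  rw [Polynomial.sum_monomial_index]
  simp

lemma shiftApply_add (r s : ℚ[X]) (x : ℕ → R) (n : ℕ) :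
    shiftApply (r + s) x n = shiftApply r x n + shiftApply s x n := by
  unfold shiftApply
  rw [Polynomial.sum_add_index] <;> intros <;> simp [add_mul]

lemma shiftApply_x_add (r : ℚ[X]) (x y : ℕ → R) (n : ℕ) :
    shiftApply r (fun m => x m + y m) n = shiftApply r x n + shiftApply r y n := by
  unfold shiftApply Polynomial.sum
  rw [← Finset.sum_add_distrib]
  exact Finset.sum_congr rfl fun i _ => by ring

lemma shiftApply_mul (r s : ℚ[X]) (x : ℕ → R) (n : ℕ) :
    shiftApply (r * s) x n = shiftApply r (shiftApply s x) n := by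
  induction r using Polynomial.induction_on' generalizing n with
  | add p q hp hq => rw [add_mul, shiftApply_add, shiftApply_add, hp, hq]
  | monomial i a =>
    induction s using Polynomial.induction_on' generalizing n with
    | add p q hp hq =>
      rw [mul_add, shiftApply_add]
      simp only [hp, hq]
      rw [shiftApply_monomial, shiftApply_monomial, shiftApply_monomial, shiftApply_add, mul_add]
    | monomial j b =>
      rw [monomial_mul_monomial, shiftApply_monomial, shiftApply_monomial, shiftApply_monomial,
        _root_.map_mul, add_assoc]
      ring


section DiffPart
variable {R : Type*} [CommRing R] [Algebra ℚ R]

/-- difference operator -/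
def diffOp (x : ℕ → R) : ℕ → R := fun n => x (n + 1) - x n

lemma shiftApply_X_sub_one (x : ℕ → R) (n : ℕ) :
    shiftApply (X - C 1) x n = diffOp x n := by
  have h : (X - C 1 : ℚ[X]) = monomial 1 1 + monomial 0 (-1) := by
    simp [Polynomial.X, ← Polynomial.C_neg, Polynomial.C_0, monomial_zero_left]
    ring
  rw [h, shiftApply_add, shiftApply_monomial, shiftApply_monomial]
  simp [diffOp, sub_eq_add_neg]

lemma shiftApply_X_sub_one_pow (m : ℕ) (x : ℕ → R) :
    shiftApply ((X - C 1) ^ m) x = diffOp^[m] x := by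
  induction m with
  | zero =>
    funext n
    simp only [pow_zero, Function.iterate_zero, id]
    have : (1 : ℚ[X]) = monomial 0 1 := by simp
    rw [this, shiftApply_monomial]
    simp
  | succ m ih =>
    funext n
    rw [pow_succ', shiftApply_mul, ih, shiftApply_X_sub_one, Function.iterate_succ_apply']
end DiffPart

lemma const_of_diff_iterate (m : ℕ) : ∀ (z : ℕ → ℝ) (c : ℝ),
    diffOp^[m] z = 0 → Tendsto z atTop (nhds c) → ∀ n, z n = z 0 := by
  induction m with
  | zero => intro z c h _ n; simp only [Function.iterate_zero, id] at h; rw [h]; rfl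
  | succ m ih =>
    intro z c h hz n
    have hd : Tendsto (diffOp z) atTop (nhds (c - c)) := by
      apply Tendsto.sub _ hz
      exact hz.comp (tendsto_add_atTop_nat 1)
    rw [sub_self] at hd
    have h' : diffOp^[m] (diffOp z) = 0 := by
      rw [← Function.iterate_succ_apply]; exact h
    have hconst := ih (diffOp z) 0 h' hd
    have h0 : diffOp z 0 = 0 := by
      have := tendsto_nhds_unique hd (by
        have : (fun _ : ℕ => diffOp z 0) = diffOp z := by funext n; rw [hconst n]
        rw [← this]; exact tendsto_const_nhds)
      exact this.symm
    have hzero : ∀ n, diffOp z n = 0 := fun n => (hconst n).trans h0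
    induction n with
    | zero => rfl
    | succ n ihn =>
      have := hzero n
      simp only [diffOp, sub_eq_zero] at this
      rw [this, ihn]


section helpers
variable {Q' : Type} [Fintype Q'] [DecidableEq Q']

lemma sum_mulVec' {ι : Type*} (s : Finset ι) (B : ι → Matrix Q' Q' ℚ) (y : Q' → ℚ) :
    (∑ i ∈ s, B i).mulVec y = ∑ i ∈ s, (B i).mulVec y := by
  ext q
  simp [Matrix.mulVec, dotProduct, Finset.sum_mul, Matrix.sum_apply,
    Finset.sum_apply]
  rw [Finset.sum_comm]

lemma dotProduct_sum' {ι : Type*} (s : Finset ι) (u : Q' → ℚ) (z : ι → Q' → ℚ) :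
    u ⬝ᵥ (∑ i ∈ s, z i) = ∑ i ∈ s, u ⬝ᵥ z i := by
  simp [dotProduct, Finset.mul_sum, Finset.sum_apply]
  rw [Finset.sum_comm]
end helpers


lemma key_rat_limit {Q' : Type} [Fintype Q'] (k : ℕ) (hk : 2 ≤ k) (δ' : Q' → ℕ → Q')
    (F : ℕ → Q') (hF : ∀ m d, d < k → F (k * m + d) = δ' (F m) d)
    (P : Q' → Prop) [DecidablePred P] (c : ℕ → ℕ)
    (hc : ∀ n, c n = ((Finset.range (k ^ n)).filter (fun m => P (F m))).card)
    (L : ℝ) (hL : Tendsto (fun n => (c n : ℝ) / (k : ℝ) ^ n) atTop (nhds L)) :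
    ∃ q : ℚ, L = (q : ℝ) := by
  classical
  have hk0 : (k : ℚ) ≠ 0 := by positivity
  have hkpos : 0 < k := by omega
  -- counting vector
  set v : ℕ → Q' → ℚ := fun n q => (((Finset.range (k ^ n)).filter (fun m => F m = q)).card : ℚ) with hv
  set M : Matrix Q' Q' ℚ := fun q q' => (((Finset.range k).filter (fun d => δ' q' d = q)).card : ℚ) with hM
  -- fiberwise counting lemma
  have fiber : ∀ (s : Finset ℕ) (g : Q' → ℚ),
      (∑ m ∈ s, g (F m)) = ∑ q' : Q', (((s.filter (fun m => F m = q')).card : ℚ)) * g q' := by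
    intro s g
    rw [← Finset.sum_fiberwise' s F g]
    refine Finset.sum_congr rfl fun q' _ => ?_
    rw [Finset.sum_const, nsmul_eq_mul]
  -- reindexing over base-k digits
  have reindex : ∀ (g : ℕ → ℚ) (n : ℕ), ∑ m ∈ Finset.range (k ^ (n + 1)), g m
      = ∑ m' ∈ Finset.range (k ^ n), ∑ d ∈ Finset.range k, g (k * m' + d) := by
    intro g n
    rw [← Finset.sum_product']
    refine Finset.sum_nbij' (i := fun m => (m / k, m % k)) (j := fun p => k * p.1 + p.2) ?_ ?_ ?_ ?_ ?_
    · intro m hm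
      simp only [Finset.mem_range, Finset.mem_product] at *
      constructor
      · rw [Nat.div_lt_iff_lt_mul hkpos]
        rwa [pow_succ] at hm
      · exact Nat.mod_lt _ hkpos
    · intro p hp
      simp only [Finset.mem_range, Finset.mem_product] at *
      calc k * p.1 + p.2 < k * p.1 + k := by omega
        _ = k * (p.1 + 1) := by ring
        _ ≤ k * k ^ n := Nat.mul_le_mul_left _ (by omega)
        _ = k ^ (n + 1) := by rw [pow_succ]; ring
    · intro m _
      simpa using Nat.div_add_mod m k
    · intro p hp
      simp only [Finset.mem_range, Finset.mem_product] at hp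
      ext
      · simp [Nat.mul_add_div hkpos, Nat.div_eq_of_lt hp.2]
      · simp [Nat.mul_add_mod, Nat.mod_eq_of_lt hp.2]
    · intro m _
      simp [Nat.div_add_mod]
  -- card as sum
  have card_sum : ∀ (s : Finset ℕ) (p : ℕ → Prop) (_ : DecidablePred p),
      ((s.filter p).card : ℚ) = ∑ m ∈ s, if p m then (1:ℚ) else 0 := by
    intro s p _
    rw [Finset.card_filter]
    push_cast
    exact Finset.sum_congr rfl fun m _ => by split <;> simp
  -- the matrix recurrence
  have hrec : ∀ n q, v (n + 1) q = ∑ q' : Q', M q q' * v n q' := by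
    intro n q
    rw [hv]
    simp only
    rw [card_sum _ _ _, reindex]
    have : ∀ m' ∈ Finset.range (k ^ n),
        (∑ d ∈ Finset.range k, if F (k * m' + d) = q then (1:ℚ) else 0)
        = (fun q' => (((Finset.range k).filter (fun d => δ' q' d = q)).card : ℚ)) (F m') := by
      intro m' _
      simp only
      rw [card_sum _ _ _]
      exact Finset.sum_congr rfl fun d hd => by rw [hF m' d (Finset.mem_range.mp hd)]
    rw [Finset.sum_congr rfl this,
      fiber (Finset.range (k ^ n)) (fun q' => (((Finset.range k).filter (fun d => δ' q' d = q)).card : ℚ))]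
    exact Finset.sum_congr rfl fun q' _ => mul_comm _ _
  -- normalized vectors
  set A : Matrix Q' Q' ℚ := (k : ℚ)⁻¹ • M with hA
  set w : ℕ → Q' → ℚ := fun n => ((k : ℚ) ^ n)⁻¹ • v n with hw
  have hwrec : ∀ n, w (n + 1) = A.mulVec (w n) := by
    intro n
    funext q
    show ((k:ℚ) ^ (n+1))⁻¹ * v (n+1) q = _
    rw [hrec]
    have : A.mulVec (w n) q = ∑ q' : Q', ((k:ℚ)⁻¹ * M q q') * (((k:ℚ)^n)⁻¹ * v n q') := by
      simp [Matrix.mulVec, dotProduct, hA, hw, Matrix.smul_apply, smul_eq_mul]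
    rw [this, Finset.mul_sum]
    refine Finset.sum_congr rfl fun q' _ => ?_
    rw [pow_succ, mul_inv]
    ring
  have hwn : ∀ n, w n = (A ^ n).mulVec (w 0) := by
    intro n
    induction n with
    | zero => simp [pow_zero, Matrix.one_mulVec]
    | succ n ih => rw [hwrec, ih, Matrix.mulVec_mulVec, ← pow_succ']
  set u : Q' → ℚ := fun q => if P q then 1 else 0 with hu
  set xq : ℕ → ℚ := fun n => u ⬝ᵥ w n with hxq
  have hxc : ∀ n, xq n = (c n : ℚ) / (k : ℚ) ^ n := by
    intro n
    have h2 : ((c n : ℚ)) = u ⬝ᵥ v n := by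
      rw [hc n, card_sum _ _ _]
      have hb : ∀ m ∈ Finset.range (k^n), (if P (F m) then (1:ℚ) else 0) = u (F m) :=
        fun m _ => rfl
      rw [Finset.sum_congr rfl hb, fiber _ u]
      rw [dotProduct]
      exact Finset.sum_congr rfl fun q' _ => mul_comm _ _
    show u ⬝ᵥ w n = _
    rw [hw]
    simp only
    rw [dotProduct_smul, ← h2, smul_eq_mul]
    field_simp
  -- Cayley-Hamilton
  set p : ℚ[X] := A.charpoly with hp
  have hCH : Polynomial.aeval A p = 0 := Matrix.aeval_self_charpoly A
  have hp0 : p ≠ 0 := (Matrix.charpoly_monic A).ne_zero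
  have hshift0 : ∀ n, shiftApply p xq n = 0 := by
    intro n
    unfold shiftApply
    have hterm : ∀ i ∈ p.support, (algebraMap ℚ ℚ) (p.coeff i) * xq (n + i)
        = u ⬝ᵥ ((p.coeff i • A ^ i).mulVec ((A ^ n).mulVec (w 0))) := by
      intro i _
      rw [eq_ratCast (algebraMap ℚ ℚ), Rat.cast_id, hxq]
      simp only
      rw [hwn (n+i)]
      have hpow : (A ^ (n + i)) = A ^ i * A ^ n := by rw [← pow_add, add_comm]
      rw [hpow, ← Matrix.mulVec_mulVec, Matrix.smul_mulVec, dotProduct_smul,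
        smul_eq_mul]
    rw [Polynomial.sum_def, Finset.sum_congr rfl hterm, ← dotProduct_sum', ← sum_mulVec']
    have haev : (∑ i ∈ p.support, p.coeff i • A ^ i) = Polynomial.aeval A p := by
      rw [Polynomial.aeval_def, Polynomial.eval₂_eq_sum, Polynomial.sum_def]
      exact Finset.sum_congr rfl fun i _ => Algebra.smul_def _ _
    rw [haev, hCH, Matrix.zero_mulVec, dotProduct_zero]
  -- factor out (X - 1)
  set m := p.rootMultiplicity 1 with hm
  set r := p /ₘ (X - C 1) ^ m with hr
  have hfac : (X - C 1) ^ m * r = p := Polynomial.pow_mul_divByMonic_rootMultiplicity_eq p 1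
  have hr1 : r.eval 1 ≠ 0 := Polynomial.eval_divByMonic_pow_rootMultiplicity_ne_zero 1 hp0
  set x : ℕ → ℝ := fun n => ((xq n : ℚ) : ℝ) with hx
  have hcast : ∀ (s : ℚ[X]) (n : ℕ), shiftApply s x n = ((shiftApply s xq n : ℚ) : ℝ) := by
    intro s n
    unfold shiftApply
    rw [Polynomial.sum_def, Polynomial.sum_def, Rat.cast_sum]
    refine Finset.sum_congr rfl fun i _ => ?_
    rw [Rat.cast_mul, eq_ratCast (algebraMap ℚ ℝ), eq_ratCast (algebraMap ℚ ℚ), Rat.cast_id]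
  have hxlim : Tendsto x atTop (nhds L) := by
    have hxeq : x = fun n => (c n : ℝ) / (k:ℝ)^n := by
      funext n
      rw [hx]
      show ((xq n : ℚ) : ℝ) = _
      rw [hxc n]
      push_cast
      ring
    rw [hxeq]
    exact hL
  set z : ℕ → ℝ := fun n => shiftApply r x n with hz
  have hdz : diffOp^[m] z = 0 := by
    funext n
    show diffOp^[m] z n = (0 : ℝ)
    rw [← shiftApply_X_sub_one_pow m z, hz, ← shiftApply_mul, hfac, hcast, hshift0,
      Rat.cast_zero]
  have hzlim : Tendsto z atTop (nhds (((r.eval 1 : ℚ) : ℝ) * L)) := by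
    have hzeq : z = fun n => ∑ i ∈ r.support, ((r.coeff i : ℚ) : ℝ) * x (n+i) := by
      funext n
      rw [hz]
      unfold shiftApply
      simp only [Polynomial.sum_def]
      exact Finset.sum_congr rfl fun i _ => by rw [eq_ratCast (algebraMap ℚ ℝ)]
    have heval : ((r.eval 1 : ℚ) : ℝ) * L = ∑ i ∈ r.support, ((r.coeff i : ℚ):ℝ) * L := by
      rw [Polynomial.eval_eq_sum, Polynomial.sum_def, Rat.cast_sum, Finset.sum_mul]
      exact Finset.sum_congr rfl fun i _ => by rw [one_pow, mul_one]
    rw [hzeq, heval]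
    exact tendsto_finset_sum _ fun i _ => (hxlim.comp (tendsto_add_atTop_nat i)).const_mul _
  have hconst := const_of_diff_iterate m z _ hdz hzlim
  have hz0 : ((r.eval 1 : ℚ) : ℝ) * L = z 0 := by
    apply tendsto_nhds_unique hzlim
    have hzc : z = fun _ => z 0 := funext hconst
    exact hzc ▸ tendsto_const_nhds
  refine ⟨shiftApply r xq 0 / r.eval 1, ?_⟩
  have hz00 : z 0 = ((shiftApply r xq 0 : ℚ) : ℝ) := hcast r 0
  rw [hz00] at hz0
  have he : ((r.eval 1 : ℚ) : ℝ) ≠ 0 := by exact_mod_cast hr1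
  rw [Rat.cast_div, eq_div_iff he, ← hz0]
  ring


end Aux

open Polynomial Matrix in
theorem density_automatic_set_rational
    (k : ℕ) (hk : 2 ≤ k) (S : Set ℕ) (hS : IsAutomaticSet k S)
    (L : ℝ) (hL : Filter.Tendsto (fun N : ℕ => (piCount S N : ℝ) / N) Filter.atTop (nhds L)) :
    ∃ q : ℚ, L = (q : ℝ) := by
  classical
  obtain ⟨Q, instQ, q₀, δ, τ, hauto⟩ := hS
  haveI := instQ
  let δ' : Option Q → ℕ → Option Q := fun s d => match s with
    | none => if d = 0 then none else some (δ q₀ d)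
    | some s => some (δ s d)
  let τ' : Option Q → ℕ := fun s => match s with
    | none => τ q₀
    | some s => τ s
  let F : ℕ → Option Q := fun m => ((Nat.digits k m).reverse).foldl δ' none
  have hk1 : 1 < k := hk
  have hkpos : 0 < k := by omega
  have hFstep : ∀ m d, d < k → F (k * m + d) = δ' (F m) d := by
    intro m d hd
    by_cases h0 : k * m + d = 0
    · have hd0 : d = 0 := by omega
      have hm0 : m = 0 := by
        rcases Nat.mul_eq_zero.mp (by omega : k * m = 0) with h | h
        · omega
        · exact h
      subst hd0; subst hm0
      show F 0 = δ' (F 0) 0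
      have : F 0 = none := by simp [F]
      rw [this]
      rfl
    · have hdig : Nat.digits k (k * m + d) = d :: Nat.digits k m := by
        rw [Nat.digits_def' hk1 (Nat.pos_of_ne_zero h0)]
        congr 1
        · rw [Nat.mul_add_mod, Nat.mod_eq_of_lt hd]
        · congr 1
          rw [Nat.mul_add_div hkpos, Nat.div_eq_of_lt hd, add_zero]
      show ((Nat.digits k (k * m + d)).reverse).foldl δ' none = _
      rw [hdig, List.reverse_cons, List.foldl_append]
      rfl
  have hsome : ∀ (w : List ℕ) (s : Q), w.foldl δ' (some s) = some (w.foldl δ s) := by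
    intro w
    induction w with
    | nil => intro s; rfl
    | cons a t ih => intro s; exact ih (δ s a)
  have hτF : ∀ m, τ' (F m) = S.indicator (fun _ => (1:ℕ)) m := by
    intro m
    by_cases hm : m = 0
    · subst hm
      rw [hauto 0]
      simp [F, τ', Nat.digits_zero]
    · have hne : (Nat.digits k m).reverse ≠ [] := by
        simpa using Nat.digits_ne_nil_iff_ne_zero.mpr hm
      obtain ⟨d, t, hdt⟩ := List.exists_cons_of_ne_nil hne
      have hd0 : d ≠ 0 := by
        have hlast := Nat.getLast_digit_ne_zero k hm
        have h1 : (Nat.digits k m).reverse.head? = some d := by rw [hdt]; rfl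
        rw [List.head?_reverse,
          List.getLast?_eq_getLast (Nat.digits_ne_nil_iff_ne_zero.mpr hm)] at h1
        exact Option.some_inj.mp h1 ▸ hlast
      have hstart : δ' none d = some (δ q₀ d) := by simp [δ', hd0]
      have : F m = some ((Nat.digits k m).reverse.foldl δ q₀) := by
        show ((Nat.digits k m).reverse).foldl δ' none = _
        rw [hdt, List.foldl_cons, hstart, hsome]
        rfl
      rw [this, hauto m]
  have hmem : ∀ m, m ∈ S ↔ τ' (F m) = 1 := by
    intro m
    by_cases hmS : m ∈ S <;> simp [hτF m, Set.indicator_apply, hmS]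
  have hpi : ∀ N, piCount S N = ((Finset.range N).filter (fun m => τ' (F m) = 1)).card := by
    intro N
    rw [piCount, ← Set.ncard_coe_finset]
    congr 1
    ext mm
    simp only [Set.mem_inter_iff, Set.mem_Iio, Finset.coe_filter, Finset.mem_range,
      Set.mem_setOf_eq, hmem mm]
    tauto
  have hlim2 : Filter.Tendsto (fun n => ((piCount S (k ^ n) : ℝ)) / (k:ℝ) ^ n) atTop (nhds L) := by
    have hcomp := hL.comp (tendsto_pow_atTop_atTop_of_one_lt hk1)
    have : (fun n => ((piCount S (k ^ n) : ℝ)) / (k:ℝ) ^ n)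
        = (fun N : ℕ => (piCount S N : ℝ) / N) ∘ (fun n => k ^ n) := by
      funext n
      simp [Function.comp]
    rw [this]
    exact hcomp
  exact key_rat_limit k hk δ' F hFstep (fun q => τ' q = 1) (fun n => piCount S (k ^ n))
    (fun n => hpi (k ^ n)) L hlim2
end

section
/- Let k ≥ 2 be a natural number and let (α, β) be a pair of rational numbers satisfying either 0 < α ≤ β < 1 or (α, β) ∈ {(0,0), (1,1)}. Then there exists a k-automatic set S ⊆ ℕ whose lower density is α and whose upper density is β. -/
open Filter

open Filter Topology

namespace AutoDensityAux
open Finset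

/-! ### counting numbers with `n % q < p` -/

lemma cntMod_eq (q p : ℕ) (hq : 0 < q) (hp : p ≤ q) (N : ℕ) :
    ((range N).filter (fun n => n % q < p)).card = p * (N / q) + min (N % q) p := by
  induction N with
  | zero => simp
  | succ N ih =>
    rw [Finset.range_add_one, Finset.filter_insert]
    have key : ((N+1) / q = N / q ∧ (N+1) % q = N % q + 1 ∧ N % q + 1 < q)
        ∨ (N % q + 1 = q ∧ (N+1)/q = N/q + 1 ∧ (N+1) % q = 0) := by
      have hdm := Nat.div_add_mod N q
      rcases Nat.lt_or_ge (N % q + 1) q with hc | hc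
      · left
        have e : N + 1 = q * (N / q) + (N % q + 1) := by omega
        refine ⟨?_, ?_, hc⟩
        · rw [e, Nat.mul_add_div hq, Nat.div_eq_of_lt hc, Nat.add_zero]
        · rw [e, Nat.mul_add_mod, Nat.mod_eq_of_lt hc]
      · right
        have hlt := Nat.mod_lt N hq
        have hq' : N % q + 1 = q := by omega
        have e : N + 1 = q * (N / q + 1) := by
          have : q * (N / q + 1) = q * (N / q) + q := by ring
          omega
        refine ⟨hq', ?_, ?_⟩
        · rw [e, Nat.mul_div_cancel_left _ hq]
        · rw [e, Nat.mul_mod_right]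
    by_cases h : N % q < p
    · rw [if_pos h, Finset.card_insert_of_notMem (by simp), ih]
      rcases key with ⟨e1, e2, e3⟩ | ⟨e0, e1, e2⟩
      · rw [e1, e2]
        generalize p * (N / q) = x
        omega
      · rw [e1, e2, Nat.mul_add]
        generalize p * (N / q) = x
        have : p = q := by omega
        omega
    · rw [if_neg h, ih]
      rcases key with ⟨e1, e2, e3⟩ | ⟨e0, e1, e2⟩
      · rw [e1, e2]
        generalize p * (N / q) = x
        omega
      · rw [e1, e2, Nat.mul_add]
        generalize p * (N / q) = x
        omega

lemma cntMod_bounds (q p N : ℕ) (hq : 0 < q) (hp : p ≤ q) :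
    p * N ≤ q * ((range N).filter (fun n => n % q < p)).card + p * q ∧
    q * ((range N).filter (fun n => n % q < p)).card ≤ p * N + p * q := by
  rw [cntMod_eq q p hq hp]
  have e : q * (N / q) + N % q = N := Nat.div_add_mod N q
  have hmodlt : N % q < q := Nat.mod_lt _ hq
  constructor
  · have h1 : p * (N % q) ≤ q * min (N % q) p + p * q := by
      rcases le_total (N % q) p with hle | hle
      · rw [min_eq_left hle]
        calc p * (N % q) ≤ q * (N % q) := Nat.mul_le_mul_right _ hp
          _ ≤ q * (N % q) + p * q := Nat.le_add_right _ _
      · rw [min_eq_right hle]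
        calc p * (N % q) ≤ p * q := Nat.mul_le_mul_left _ hmodlt.le
          _ ≤ q * p + p * q := Nat.le_add_left _ _
    calc p * N = p * (q * (N / q) + N % q) := by rw [e]
      _ = q * (p * (N / q)) + p * (N % q) := by ring
      _ ≤ q * (p * (N / q)) + (q * min (N % q) p + p * q) := by
            exact Nat.add_le_add_left h1 _
      _ = q * (p * (N / q) + min (N % q) p) + p * q := by ring
  · have h2 : q * min (N % q) p ≤ p * q := by
      calc q * min (N % q) p ≤ q * p := Nat.mul_le_mul_left _ (min_le_right _ _)
        _ = p * q := Nat.mul_comm _ _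
    have h3 : p * (q * (N / q)) ≤ p * N := Nat.mul_le_mul_left _ (by omega)
    calc q * (p * (N / q) + min (N % q) p) = p * (q * (N / q)) + q * min (N % q) p := by ring
      _ ≤ p * N + p * q := Nat.add_le_add h3 h2

def cntF (P : ℕ → Prop) [DecidablePred P] (N : ℕ) : ℕ := ((Finset.range N).filter P).card

lemma cntF_le (P : ℕ → Prop) [DecidablePred P] (N : ℕ) : cntF P N ≤ N := by
  classical
  calc cntF P N ≤ (range N).card := Finset.card_filter_le _ _
    _ = N := Finset.card_range N

lemma cntF_split (P : ℕ → Prop) [DecidablePred P] {u w : ℕ} (h : u ≤ w) :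
    cntF P w = cntF P u + ((Finset.Ico u w).filter P).card := by
  classical
  unfold cntF
  rw [Finset.range_eq_Ico, ← Finset.Ico_union_Ico_eq_Ico (Nat.zero_le u) h,
    Finset.filter_union, Finset.card_union_of_disjoint
      (Finset.disjoint_filter_filter (Finset.Ico_disjoint_Ico_consecutive 0 u w)), ← Finset.range_eq_Ico]

lemma segBounds (q p u w : ℕ) (hq : 0 < q) (hp : p ≤ q) (h : u ≤ w) :
    p * w ≤ q * ((Finset.Ico u w).filter (fun n => n % q < p)).card + p * u + 2*(p*q) ∧
    q * ((Finset.Ico u w).filter (fun n => n % q < p)).card + p * u ≤ p * w + 2*(p*q) := by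
  have hsplit := cntF_split (fun n => n % q < p) h
  unfold cntF at hsplit
  have hu := cntMod_bounds q p u hq hp
  have hw := cntMod_bounds q p w hq hp
  have e1 : q * ((range w).filter (fun n => n % q < p)).card
      = q * ((range u).filter (fun n => n % q < p)).card
        + q * ((Finset.Ico u w).filter (fun n => n % q < p)).card := by
    rw [hsplit]; ring
  constructor
  · linarith [hu.2, hw.1]
  · linarith [hu.1, hw.2]

/-! ### filter helpers -/

lemma frequently_of_tendsto_subseq {P : ℕ → Prop} {g : ℕ → ℕ}
    (hg : Tendsto g atTop atTop) (h : ∀ᶠ L in atTop, P (g L)) :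
    ∃ᶠ N in atTop, P N := by
  rw [Filter.frequently_atTop]
  intro b
  obtain ⟨L, hL1, hL2⟩ := ((hg.eventually_ge_atTop b).and h).exists
  exact ⟨g L, hL1, hL2⟩

lemma limsup_eq_of_bounds (f err : ℕ → ℝ) (g : ℕ → ℕ) (b : ℝ)
    (hf0 : ∀ N, 0 ≤ f N) (hf1 : ∀ N, f N ≤ 1)
    (hub : ∀ᶠ N in atTop, f N ≤ b + err N)
    (herr : Tendsto err atTop (𝓝 0))
    (hg : Tendsto g atTop atTop)
    (hsub : Tendsto (fun L => f (g L)) atTop (𝓝 b)) :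
    atTop.limsup f = b := by
  have hbb : IsBoundedUnder (· ≤ ·) atTop f :=
    ⟨1, Filter.eventually_map.2 (Filter.Eventually.of_forall hf1)⟩
  apply le_antisymm
  · have hlim : Tendsto (fun N => b + err N) atTop (𝓝 b) := by
      simpa using tendsto_const_nhds.add herr
    have h1 : atTop.limsup f ≤ atTop.limsup (fun N => b + err N) :=
      limsup_le_limsup hub (isCoboundedUnder_le_of_le atTop (fun i => hf0 i))
        hlim.isBoundedUnder_le
    rwa [hlim.limsup_eq] at h1
  · refine le_of_forall_pos_le_add fun ε hε => ?_
    have hfreq : ∃ᶠ N in atTop, b - ε ≤ f N := by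
      refine frequently_of_tendsto_subseq hg ?_
      exact hsub.eventually (eventually_ge_nhds (by linarith))
    have := Filter.le_limsup_of_frequently_le hfreq hbb
    linarith

lemma liminf_eq_of_bounds (f err : ℕ → ℝ) (g : ℕ → ℕ) (b : ℝ)
    (hf0 : ∀ N, 0 ≤ f N) (hf1 : ∀ N, f N ≤ 1)
    (hlb : ∀ᶠ N in atTop, b - err N ≤ f N)
    (herr : Tendsto err atTop (𝓝 0))
    (hg : Tendsto g atTop atTop)
    (hsub : Tendsto (fun L => f (g L)) atTop (𝓝 b)) :
    atTop.liminf f = b := by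
  have hbb : IsBoundedUnder (· ≥ ·) atTop f :=
    ⟨0, Filter.eventually_map.2 (Filter.Eventually.of_forall hf0)⟩
  apply le_antisymm
  · refine le_of_forall_pos_le_add fun ε hε => ?_
    have hfreq : ∃ᶠ N in atTop, f N ≤ b + ε := by
      refine frequently_of_tendsto_subseq hg ?_
      exact hsub.eventually (eventually_le_nhds (by linarith))
    exact Filter.liminf_le_of_frequently_le hfreq hbb |>.trans (by linarith)
  · have hlim : Tendsto (fun N => b - err N) atTop (𝓝 b) := by
      simpa using tendsto_const_nhds.sub herr
    have h1 : atTop.liminf (fun N => b - err N) ≤ atTop.liminf f :=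
      liminf_le_liminf hlb hlim.isBoundedUnder_ge
        (isCoboundedUnder_ge_of_le atTop (fun i => hf1 i))
    rwa [hlim.liminf_eq] at h1

lemma rate_tendsto (M : ℕ) (hM : 2 ≤ M) (c : ℝ) :
    Tendsto (fun L : ℕ => ((L : ℝ) + c) / (M : ℝ)^L) atTop (𝓝 0) := by
  have hM1 : (1:ℝ) < M := by exact_mod_cast hM
  have hr : ‖(1/(M:ℝ))‖ < 1 := by
    rw [Real.norm_eq_abs, abs_of_pos (by positivity)]
    rw [div_lt_one (by positivity)]
    linarith
  have hs : Tendsto (fun L : ℕ => (L:ℝ) * (1/(M:ℝ))^L) atTop (𝓝 0) := by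
    have := (summable_pow_mul_geometric_of_norm_lt_one 1 hr).tendsto_atTop_zero
    simpa [pow_one] using this
  have hc : Tendsto (fun L : ℕ => c * (1/(M:ℝ))^L) atTop (𝓝 0) := by
    have := tendsto_pow_atTop_nhds_zero_of_norm_lt_one hr
    simpa using this.const_mul c
  have := hs.add hc
  simp only [add_zero] at this
  refine this.congr fun L => ?_
  have hMp : (0:ℝ) < (M:ℝ)^L := by positivity
  rw [div_pow, one_pow, ← add_mul, mul_one_div]

lemma log_tendsto (M : ℕ) (hM : 2 ≤ M) :
    Tendsto (fun N : ℕ => Nat.log M N) atTop atTop := by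
  rw [tendsto_atTop_atTop]
  intro b
  refine ⟨M ^ b, fun N hN => ?_⟩
  have hp : 0 < M ^ b := Nat.pow_pos (by omega)
  have hN0 : N ≠ 0 := by omega
  exact (Nat.le_log_iff_pow_le (by omega) hN0).2 hN

end AutoDensityAux
set_option linter.unusedSectionVars false
namespace AutoDensityAux
open Finset

structure Setup (P : ℕ → Prop) (M d q a c A B : ℕ) : Prop where
  hq : 0 < q
  ha : a ≤ q
  hc : c ≤ q
  hd : 2 ≤ d
  hdM : d < M
  hAB : A ≤ B
  hAq : A ≤ q
  hP0 : ¬ P 0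
  hBqda : B * q ≤ d * a
  hdcAq : d * c ≤ A * q
  ID1 : A * q + d * a * d = B * q * d + d * a
  ID2 : B * q * d + d * c * M = A * q * M + d * c * d
  hblock : ∀ L n, M ^ L ≤ n → n < M ^ (L+1) →
    (P n ↔ n % q < (if n < d * M ^ L then a else c))

variable {P : ℕ → Prop} [DecidablePred P] {M d q a c A B : ℕ}

section SetupLemmas
variable (hs : Setup P M d q a c A B)
include hs

lemma Setup.hM2 : 2 ≤ M := le_trans hs.hd hs.hdM.le

lemma Setup.hXpos (L : ℕ) : 0 < M ^ L := Nat.pow_pos (by have := hs.hM2; omega)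

lemma Setup.hXd (L : ℕ) : M ^ L ≤ d * M ^ L :=
  Nat.le_mul_of_pos_left _ (by have := hs.hd; omega)

lemma Setup.hXM (L : ℕ) : d * M ^ L ≤ M ^ (L + 1) := by
  rw [pow_succ, mul_comm (M ^ L) M]
  exact Nat.mul_le_mul_right _ hs.hdM.le

lemma Setup.seg1 (L w : ℕ) (hw1 : M ^ L ≤ w) (hw2 : w ≤ d * M ^ L) :
    a * w ≤ q * ((Finset.Ico (M ^ L) w).filter P).card + a * M ^ L + 2 * (a * q) ∧
    q * ((Finset.Ico (M ^ L) w).filter P).card + a * M ^ L ≤ a * w + 2 * (a * q) := by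
  have hcongr : (Finset.Ico (M ^ L) w).filter P
      = (Finset.Ico (M ^ L) w).filter (fun n => n % q < a) := by
    apply Finset.filter_congr
    intro n hn
    rw [Finset.mem_Ico] at hn
    have hlt : n < d * M ^ L := lt_of_lt_of_le hn.2 hw2
    rw [hs.hblock L n hn.1 (lt_of_lt_of_le hlt (hs.hXM L)), if_pos hlt]
  rw [hcongr]
  exact segBounds q a _ w hs.hq hs.ha hw1

lemma Setup.seg2 (L u w : ℕ) (hu : d * M ^ L ≤ u) (huw : u ≤ w) (hw : w ≤ M ^ (L + 1)) :
    c * w ≤ q * ((Finset.Ico u w).filter P).card + c * u + 2 * (c * q) ∧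
    q * ((Finset.Ico u w).filter P).card + c * u ≤ c * w + 2 * (c * q) := by
  have hcongr : (Finset.Ico u w).filter P
      = (Finset.Ico u w).filter (fun n => n % q < c) := by
    apply Finset.filter_congr
    intro n hn
    rw [Finset.mem_Ico] at hn
    have h1 : M ^ L ≤ n := le_trans (le_trans (hs.hXd L) hu) hn.1
    have h2 : n < M ^ (L+1) := lt_of_lt_of_le hn.2 hw
    rw [hs.hblock L n h1 h2, if_neg (Nat.not_lt.2 (le_trans hu hn.1))]
  rw [hcongr]
  exact segBounds q c u w hs.hq hs.hc huw

lemma Setup.ID1X (L : ℕ) :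
    A * q * M ^ L + d * a * (d * M ^ L) = B * q * (d * M ^ L) + d * a * M ^ L := by
  have i1 : ((A * q + d * a * d : ℕ) : ℤ) = ((B * q * d + d * a : ℕ) : ℤ) := by
    exact_mod_cast hs.ID1
  push_cast at i1
  zify
  linear_combination (M : ℤ) ^ L * i1

lemma Setup.IDLX (L : ℕ) :
    A * q * M ^ L + d * a * (d * M ^ L) + d * c * M ^ (L + 1)
      = A * q * M ^ (L + 1) + d * a * M ^ L + d * c * (d * M ^ L) := by
  have i1 : ((A * q + d * a * d : ℕ) : ℤ) = ((B * q * d + d * a : ℕ) : ℤ) := by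
    exact_mod_cast hs.ID1
  have i2 : ((B * q * d + d * c * M : ℕ) : ℤ) = ((A * q * M + d * c * d : ℕ) : ℤ) := by
    exact_mod_cast hs.ID2
  push_cast at i1 i2
  zify
  rw [pow_succ]
  linear_combination (M : ℤ) ^ L * i1 + (M : ℤ) ^ L * i2

lemma Setup.errA : d * (2 * (a * q)) ≤ 2 * (d * q * q) := by
  calc d * (2 * (a * q)) = 2 * (d * (a * q)) := by ring
    _ ≤ 2 * (d * (q * q)) :=
        Nat.mul_le_mul_left 2 (Nat.mul_le_mul_left d (Nat.mul_le_mul_right q hs.ha))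
    _ = 2 * (d * q * q) := by ring

lemma Setup.errC : d * (2 * (c * q)) ≤ 2 * (d * q * q) := by
  calc d * (2 * (c * q)) = 2 * (d * (c * q)) := by ring
    _ ≤ 2 * (d * (q * q)) :=
        Nat.mul_le_mul_left 2 (Nat.mul_le_mul_left d (Nat.mul_le_mul_right q hs.hc))
    _ = 2 * (d * q * q) := by ring

lemma Setup.cnt_pow : ∀ L : ℕ,
    d * q * cntF P (M ^ L) ≤ A * q * M ^ L + 4 * d * q * q * (L + 1) ∧
    A * q * M ^ L ≤ d * q * cntF P (M ^ L) + 4 * d * q * q * (L + 1) := by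
  intro L
  induction L with
  | zero =>
    have h0 : cntF P (M ^ 0) = 0 := by
      simp only [pow_zero, cntF, Finset.range_one, Finset.filter_singleton,
        if_neg hs.hP0, Finset.card_empty]
    rw [h0]
    constructor
    · simp
    · have h1 : A * q ≤ q * q := Nat.mul_le_mul_right q hs.hAq
      have h2 : q * q * 1 ≤ q * q * (4 * d) := Nat.mul_le_mul_left _ (by have := hs.hd; omega)
      have h3 : A * q ≤ 4 * d * q * q * (0 + 1) := by
        calc A * q ≤ q * q := h1
          _ = q * q * 1 := by ring
          _ ≤ q * q * (4 * d) := h2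
          _ = 4 * d * q * q * (0 + 1) := by ring
      simpa using h3
  | succ L ih =>
    obtain ⟨IH1, IH2⟩ := ih
    have hsplit1 := cntF_split P (hs.hXd L)
    have hsplit2 := cntF_split P (hs.hXM L)
    set c2 := ((Finset.Ico (d * M ^ L) (M ^ (L + 1))).filter P).card with hc2
    have S1 := hs.seg1 L (d * M ^ L) (hs.hXd L) le_rfl
    have S2 := hs.seg2 L (d * M ^ L) (M ^ (L + 1)) le_rfl (hs.hXM L) le_rfl
    have T1a := Nat.mul_le_mul_left d S1.1
    have T1b := Nat.mul_le_mul_left d S1.2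
    have T2a := Nat.mul_le_mul_left d S2.1
    have T2b := Nat.mul_le_mul_left d S2.2
    have IDL := hs.IDLX L
    have Ea := hs.errA
    have Ec := hs.errC
    rw [hsplit2, hsplit1]
    constructor
    · linarith [T1b, T2b, IDL, Ea, Ec, IH1]
    · linarith [T1a, T2a, IDL, Ea, Ec, IH2]

lemma Setup.hdcBq : d * c ≤ B * q := le_trans hs.hdcAq (Nat.mul_le_mul_right q hs.hAB)

lemma Setup.hAqda : A * q ≤ d * a := le_trans (Nat.mul_le_mul_right q hs.hAB) hs.hBqda

lemma Setup.cnt_up (L N : ℕ) (h1 : M ^ L ≤ N) (h2 : N ≤ M ^ (L + 1)) :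
    d * q * cntF P N ≤ B * q * N + 4 * d * q * q * (L + 3) := by
  have IDX := hs.ID1X L
  have Ea := hs.errA
  have Ec := hs.errC
  rcases le_or_gt N (d * M ^ L) with hN | hN
  · rw [cntF_split P h1]
    have S := hs.seg1 L N h1 hN
    have T := Nat.mul_le_mul_left d S.2
    have IH := (hs.cnt_pow L).1
    have PR1 : B * q * (d * M ^ L) + d * a * N ≤ B * q * N + d * a * (d * M ^ L) :=
      mul_add_mul_le_mul_add_mul hs.hBqda hN
    linarith [T, IH, PR1, IDX, Ea, Nat.zero_le (d*q*q)]
  · have hsplitN := cntF_split P hN.le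
    have hsplit1 := cntF_split P (hs.hXd L)
    rw [hsplitN, hsplit1]
    have S1 := hs.seg1 L (d * M ^ L) (hs.hXd L) le_rfl
    have S2 := hs.seg2 L (d * M ^ L) N le_rfl hN.le h2
    have T1 := Nat.mul_le_mul_left d S1.2
    have T2 := Nat.mul_le_mul_left d S2.2
    have IH := (hs.cnt_pow L).1
    have PR2 : d * c * N + B * q * (d * M ^ L) ≤ d * c * (d * M ^ L) + B * q * N :=
      mul_add_mul_le_mul_add_mul hs.hdcBq hN.le
    linarith [T1, T2, IH, PR2, IDX, Ea, Ec, Nat.zero_le (d*q*q)]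

lemma Setup.cnt_lo (L N : ℕ) (h1 : M ^ L ≤ N) (h2 : N ≤ M ^ (L + 1)) :
    A * q * N ≤ d * q * cntF P N + 4 * d * q * q * (L + 3) := by
  have Ea := hs.errA
  have Ec := hs.errC
  rcases le_or_gt N (d * M ^ L) with hN | hN
  · rw [cntF_split P h1]
    have S := hs.seg1 L N h1 hN
    have T := Nat.mul_le_mul_left d S.1
    have IH := (hs.cnt_pow L).2
    have PR3 : A * q * N + d * a * M ^ L ≤ A * q * M ^ L + d * a * N :=
      mul_add_mul_le_mul_add_mul hs.hAqda h1
    linarith [T, IH, PR3, Ea, Nat.zero_le (d*q*q)]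
  · have hsplitN := cntF_split P h2
    have S := hs.seg2 L N (M ^ (L+1)) hN.le h2 le_rfl
    have T := Nat.mul_le_mul_left d S.2
    have IH := (hs.cnt_pow (L+1)).2
    have PR4 : d * c * M ^ (L+1) + A * q * N ≤ d * c * N + A * q * M ^ (L+1) :=
      mul_add_mul_le_mul_add_mul hs.hdcAq h2
    rw [hsplitN] at IH
    linarith [T, IH, PR4, Ec, Nat.zero_le (d*q*q)]

lemma Setup.cnt_att (L : ℕ) :
    B * q * (d * M ^ L) ≤ d * q * cntF P (d * M ^ L) + 4 * d * q * q * (L + 3) := by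
  have hsplit1 := cntF_split P (hs.hXd L)
  rw [hsplit1]
  have S1 := hs.seg1 L (d * M ^ L) (hs.hXd L) le_rfl
  have T1 := Nat.mul_le_mul_left d S1.1
  have IH := (hs.cnt_pow L).2
  have IDX := hs.ID1X L
  have Ea := hs.errA
  linarith [T1, IH, IDX, Ea, Nat.zero_le (d*q*q)]

end SetupLemmas
end AutoDensityAux
namespace AutoDensityAux
open Finset Filter Topology

lemma real_up (d q C N cnt : ℕ) (E : ℝ) (hd : 0 < d) (hq : 0 < q) (hN : 0 < N)
    (h : (d:ℝ) * q * cnt ≤ (C:ℝ) * q * N + (d:ℝ) * q * E) :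
    (cnt : ℝ) / N ≤ (C:ℝ) / d + E / N := by
  have hdR : (0:ℝ) < d := by exact_mod_cast hd
  have hqR : (0:ℝ) < q := by exact_mod_cast hq
  have hNR : (0:ℝ) < N := by exact_mod_cast hN
  rw [div_add_div _ _ (ne_of_gt hdR) (ne_of_gt hNR), div_le_div_iff₀ hNR (by positivity)]
  refine le_of_mul_le_mul_left ?_ hqR
  have key := mul_le_mul_of_nonneg_right h hNR.le
  ring_nf
  ring_nf at key
  linarith [key]

lemma real_lo (d q C N cnt : ℕ) (E : ℝ) (hd : 0 < d) (hq : 0 < q) (hN : 0 < N)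
    (h : (C:ℝ) * q * N ≤ (d:ℝ) * q * cnt + (d:ℝ) * q * E) :
    (C:ℝ) / d - E / N ≤ (cnt : ℝ) / N := by
  have hdR : (0:ℝ) < d := by exact_mod_cast hd
  have hqR : (0:ℝ) < q := by exact_mod_cast hq
  have hNR : (0:ℝ) < N := by exact_mod_cast hN
  rw [sub_le_iff_le_add, ← add_div, div_le_div_iff₀ hdR hNR]
  refine le_of_mul_le_mul_left ?_ hqR
  ring_nf
  ring_nf at h
  linarith [h]

variable {P : ℕ → Prop} [DecidablePred P] {M d q a c A B : ℕ}

lemma Setup.density (hs : Setup P M d q a c A B) :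
    atTop.liminf (fun N : ℕ => (cntF P N : ℝ) / N) = (A : ℝ) / d ∧
    atTop.limsup (fun N : ℕ => (cntF P N : ℝ) / N) = (B : ℝ) / d := by
  classical
  have hM2 : 2 ≤ M := hs.hM2
  have hM1 : 1 < M := hM2
  have hdpos : 0 < d := by have := hs.hd; omega
  have hd0 : (0:ℝ) < d := by exact_mod_cast hdpos
  have hq0 : (0:ℝ) < q := by exact_mod_cast hs.hq
  set f : ℕ → ℝ := fun N => (cntF P N : ℝ) / N with hf
  have hf0 : ∀ N, 0 ≤ f N := fun N => by positivity
  have hf1 : ∀ N, f N ≤ 1 := by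
    intro N
    rcases Nat.eq_zero_or_pos N with h | h
    · simp [hf, h]
    · have h2 := cntF_le P N
      have hNR : (0:ℝ) < N := by exact_mod_cast h
      rw [hf]
      simp only
      rw [div_le_one hNR]
      exact_mod_cast h2
  -- cast helper
  have castU : ∀ N L C : ℕ, d * q * cntF P N ≤ C * q * N + 4*d*q*q*(L+3) →
      (d:ℝ) * q * (cntF P N) ≤ (C:ℝ) * q * N + (d:ℝ) * q * (4*q*((L:ℝ)+3)) := by
    intro N L C h
    have hR : ((d * q * cntF P N : ℕ):ℝ) ≤ ((C * q * N + 4*d*q*q*(L+3) : ℕ):ℝ) :=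
      Nat.cast_le.2 h
    push_cast at hR
    linarith [hR]
  have castL : ∀ N L C : ℕ, C * q * N ≤ d * q * cntF P N + 4*d*q*q*(L+3) →
      (C:ℝ) * q * N ≤ (d:ℝ) * q * (cntF P N) + (d:ℝ) * q * (4*q*((L:ℝ)+3)) := by
    intro N L C h
    have hR : ((C * q * N : ℕ):ℝ) ≤ ((d * q * cntF P N + 4*d*q*q*(L+3) : ℕ):ℝ) :=
      Nat.cast_le.2 h
    push_cast at hR
    linarith [hR]
  have castU1 : ∀ L C : ℕ, d * q * cntF P (M^L) ≤ C * q * M^L + 4*d*q*q*(L+1) →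
      (d:ℝ) * q * (cntF P (M^L)) ≤ (C:ℝ) * q * ((M^L : ℕ) : ℝ) + (d:ℝ) * q * (4*q*((L:ℝ)+3)) := by
    intro L C h
    have h' : d * q * cntF P (M^L) ≤ C * q * M^L + 4*d*q*q*(L+3) := by
      have : 4*d*q*q*(L+1) ≤ 4*d*q*q*(L+3) := Nat.mul_le_mul_left _ (by omega)
      omega
    exact castU (M^L) L C h'
  have castL1 : ∀ L C : ℕ, C * q * M^L ≤ d * q * cntF P (M^L) + 4*d*q*q*(L+1) →
      (C:ℝ) * q * ((M^L : ℕ) : ℝ) ≤ (d:ℝ) * q * (cntF P (M^L)) + (d:ℝ) * q * (4*q*((L:ℝ)+3)) := by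
    intro L C h
    have h' : C * q * M^L ≤ d * q * cntF P (M^L) + 4*d*q*q*(L+3) := by
      have : 4*d*q*q*(L+1) ≤ 4*d*q*q*(L+3) := Nat.mul_le_mul_left _ (by omega)
      omega
    exact castL (M^L) L C h'
  have hXposN : ∀ L : ℕ, 0 < M ^ L := fun L => Nat.pow_pos (by omega)
  have hXR : ∀ L : ℕ, (0:ℝ) < (M:ℝ) ^ L := fun L => by positivity
  -- error function
  set err : ℕ → ℝ := fun N => 4*(q:ℝ)*((Nat.log M N : ℝ)+3)/N with herrdef
  have hhrate : Tendsto (fun L : ℕ => 4*(q:ℝ)*(((L:ℕ):ℝ)+3)/(M:ℝ)^L) atTop (𝓝 0) := by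
    have := (rate_tendsto M hM2 3).const_mul (4*(q:ℝ))
    simpa [mul_div_assoc] using this
  have herr : Tendsto err atTop (𝓝 0) := by
    apply squeeze_zero' (g := fun N => 4*(q:ℝ)*((Nat.log M N : ℝ)+3)/(M:ℝ)^(Nat.log M N))
    · exact Filter.Eventually.of_forall fun N => by positivity
    · refine eventually_atTop.2 ⟨1, fun N hN => ?_⟩
      have hlog : (M:ℝ) ^ (Nat.log M N) ≤ (N:ℝ) := by
        exact_mod_cast Nat.pow_log_le_self M (by omega)
      apply div_le_div_of_nonneg_left (by positivity) (hXR _) hlog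
    · exact hhrate.comp (log_tendsto M hM2)
  -- global eventual bounds
  have hub : ∀ᶠ N in atTop, f N ≤ (B:ℝ)/d + err N := by
    refine eventually_atTop.2 ⟨1, fun N hN => ?_⟩
    have hN0 : 0 < N := hN
    have hL1 : M ^ (Nat.log M N) ≤ N := Nat.pow_log_le_self M (by omega)
    have hL2 : N ≤ M ^ (Nat.log M N + 1) := (Nat.lt_pow_succ_log_self hM1 N).le
    have h := castU N (Nat.log M N) B (hs.cnt_up (Nat.log M N) N hL1 hL2)
    have := real_up d q B N (cntF P N) (4*(q:ℝ)*((Nat.log M N : ℝ)+3)) hdpos hs.hq hN0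
      (by linarith [h])
    simpa [herrdef] using this
  have hlb : ∀ᶠ N in atTop, (A:ℝ)/d - err N ≤ f N := by
    refine eventually_atTop.2 ⟨1, fun N hN => ?_⟩
    have hN0 : 0 < N := hN
    have hL1 : M ^ (Nat.log M N) ≤ N := Nat.pow_log_le_self M (by omega)
    have hL2 : N ≤ M ^ (Nat.log M N + 1) := (Nat.lt_pow_succ_log_self hM1 N).le
    have h := castL N (Nat.log M N) A (hs.cnt_lo (Nat.log M N) N hL1 hL2)
    have := real_lo d q A N (cntF P N) (4*(q:ℝ)*((Nat.log M N : ℝ)+3)) hdpos hs.hq hN0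
      (by linarith [h])
    simpa [herrdef] using this
  -- subsequences
  have hgt1 : Tendsto (fun L : ℕ => M ^ L) atTop atTop :=
    tendsto_pow_atTop_atTop_of_one_lt hM1
  have hgt2 : Tendsto (fun L : ℕ => d * M ^ L) atTop atTop :=
    tendsto_atTop_mono (fun L => Nat.le_mul_of_pos_left _ hdpos) hgt1
  have hsub1 : Tendsto (fun L => f (M ^ L)) atTop (𝓝 ((A:ℝ)/d)) := by
    have hlow : Tendsto (fun L : ℕ => (A:ℝ)/d - 4*(q:ℝ)*((L:ℝ)+3)/(M:ℝ)^L) atTop (𝓝 ((A:ℝ)/d)) := by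
      simpa using tendsto_const_nhds.sub hhrate
    have hup : Tendsto (fun L : ℕ => (A:ℝ)/d + 4*(q:ℝ)*((L:ℝ)+3)/(M:ℝ)^L) atTop (𝓝 ((A:ℝ)/d)) := by
      simpa using tendsto_const_nhds.add hhrate
    refine tendsto_of_tendsto_of_tendsto_of_le_of_le' hlow hup ?_ ?_
    · refine Filter.Eventually.of_forall fun L => ?_
      have h := castL1 L A (hs.cnt_pow L).2
      have h2 := real_lo d q A (M^L) (cntF P (M^L)) (4*(q:ℝ)*((L:ℝ)+3)) hdpos hs.hq
        (hXposN L) (by linarith [h])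
      have hcast : ((M ^ L : ℕ):ℝ) = (M:ℝ)^L := by push_cast; ring
      have hfx : f (M ^ L) = (cntF P (M^L) : ℝ) / ((M^L : ℕ) : ℝ) := rfl
      rw [hfx, hcast]
      rw [hcast] at h2
      exact h2
    · refine Filter.Eventually.of_forall fun L => ?_
      have h := castU1 L A (hs.cnt_pow L).1
      have h2 := real_up d q A (M^L) (cntF P (M^L)) (4*(q:ℝ)*((L:ℝ)+3)) hdpos hs.hq
        (hXposN L) (by linarith [h])
      have hcast : ((M ^ L : ℕ):ℝ) = (M:ℝ)^L := by push_cast; ring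
      have hfx : f (M ^ L) = (cntF P (M^L) : ℝ) / ((M^L : ℕ) : ℝ) := rfl
      rw [hfx, hcast]
      rw [hcast] at h2
      exact h2
  have hsub2 : Tendsto (fun L => f (d * M ^ L)) atTop (𝓝 ((B:ℝ)/d)) := by
    have hlow : Tendsto (fun L : ℕ => (B:ℝ)/d - 4*(q:ℝ)*((L:ℝ)+3)/(M:ℝ)^L) atTop (𝓝 ((B:ℝ)/d)) := by
      simpa using tendsto_const_nhds.sub hhrate
    have hup : Tendsto (fun L : ℕ => (B:ℝ)/d + 4*(q:ℝ)*((L:ℝ)+3)/(M:ℝ)^L) atTop (𝓝 ((B:ℝ)/d)) := by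
      simpa using tendsto_const_nhds.add hhrate
    refine tendsto_of_tendsto_of_tendsto_of_le_of_le' hlow hup ?_ ?_
    · refine Filter.Eventually.of_forall fun L => ?_
      have hNpos : 0 < d * M ^ L := Nat.mul_pos hdpos (hXposN L)
      have h := castL (d * M ^ L) L B (hs.cnt_att L)
      have h2 := real_lo d q B (d * M^L) (cntF P (d * M^L)) (4*(q:ℝ)*((L:ℝ)+3)) hdpos hs.hq
        hNpos (by linarith [h])
      have hEle : 4*(q:ℝ)*((L:ℝ)+3)/((d * M^L : ℕ):ℝ) ≤ 4*(q:ℝ)*((L:ℝ)+3)/(M:ℝ)^L := by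
        apply div_le_div_of_nonneg_left (by positivity) (hXR L)
        have h3 : ((M ^ L : ℕ):ℝ) ≤ ((d * M ^ L : ℕ):ℝ) :=
          Nat.cast_le.2 (Nat.le_mul_of_pos_left _ hdpos)
        push_cast at h3
        push_cast
        linarith [h3]
      have hfx : f (d * M ^ L) = (cntF P (d * M^L) : ℝ) / ((d * M^L : ℕ) : ℝ) := rfl
      rw [hfx]
      linarith [h2, hEle]
    · refine Filter.Eventually.of_forall fun L => ?_
      have hNpos : 0 < d * M ^ L := Nat.mul_pos hdpos (hXposN L)
      have h := castU (d * M ^ L) L B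
        (hs.cnt_up L (d * M ^ L) (hs.hXd L) (hs.hXM L))
      have h2 := real_up d q B (d * M^L) (cntF P (d * M^L)) (4*(q:ℝ)*((L:ℝ)+3)) hdpos hs.hq
        hNpos (by linarith [h])
      have hEle : 4*(q:ℝ)*((L:ℝ)+3)/((d * M^L : ℕ):ℝ) ≤ 4*(q:ℝ)*((L:ℝ)+3)/(M:ℝ)^L := by
        apply div_le_div_of_nonneg_left (by positivity) (hXR L)
        have h3 : ((M ^ L : ℕ):ℝ) ≤ ((d * M ^ L : ℕ):ℝ) :=
          Nat.cast_le.2 (Nat.le_mul_of_pos_left _ hdpos)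
        push_cast at h3
        push_cast
        linarith [h3]
      have hfx : f (d * M ^ L) = (cntF P (d * M^L) : ℝ) / ((d * M^L : ℕ) : ℝ) := rfl
      rw [hfx]
      linarith [h2, hEle]
  constructor
  · exact liminf_eq_of_bounds f err (fun L => M ^ L) ((A:ℝ)/d) hf0 hf1 hlb herr hgt1 hsub1
  · exact limsup_eq_of_bounds f err (fun L => d * M ^ L) ((B:ℝ)/d) hf0 hf1 hub herr hgt2 hsub2

end AutoDensityAux
namespace AutoDensityAux
open Finset

lemma foldl_digits_step {Q : Type} (k : ℕ) (hk : 2 ≤ k) (δ : Q → ℕ → Q) (q₀ : Q)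
    {n : ℕ} (hn : n ≠ 0) :
    ((Nat.digits k n).reverse).foldl δ q₀
      = δ (((Nat.digits k (n / k)).reverse).foldl δ q₀) (n % k) := by
  rw [Nat.digits_def' (by omega : 1 < k) (Nat.pos_of_ne_zero hn)]
  rw [List.reverse_cons, List.foldl_append]
  rfl

def thePred (k m d q a c : ℕ) (n : ℕ) : Prop :=
  0 < n ∧ n % q < (if n / k ^ (Nat.log k n - Nat.log k n % m) < d then a else c)

instance (k m d q a c : ℕ) : DecidablePred (thePred k m d q a c) := fun n => by
  unfold thePred; infer_instance

lemma thePred_block (k m d q a c : ℕ) (hk : 2 ≤ k) (hm : 0 < m) :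
    ∀ L n, (k ^ m) ^ L ≤ n → n < (k ^ m) ^ (L + 1) →
      (thePred k m d q a c n ↔ n % q < (if n < d * (k ^ m) ^ L then a else c)) := by
  intro L n h1 h2
  have hk1 : 1 < k := hk
  have hMpos : 0 < (k ^ m) ^ L := Nat.pow_pos (Nat.pow_pos (by omega))
  have hn0 : 0 < n := lt_of_lt_of_le hMpos h1
  have hn : n ≠ 0 := hn0.ne'
  rw [← pow_mul] at h1 h2 ⊢
  have hlog1 : m * L ≤ Nat.log k n := (Nat.le_log_iff_pow_le hk1 hn).2 h1
  have hlog2 : Nat.log k n < m * (L + 1) := (Nat.log_lt_iff_lt_pow hk1 hn).2 h2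
  have e1 : Nat.log k n % m = Nat.log k n - m * L := by
    have elt : Nat.log k n - m * L < m := by
      rw [Nat.mul_succ] at hlog2
      exact (Nat.sub_lt_iff_lt_add hlog1).2 (by linarith)
    conv_lhs => rw [show Nat.log k n = m * L + (Nat.log k n - m * L) from
      (Nat.add_sub_cancel' hlog1).symm]
    rw [Nat.mul_add_mod]
    exact Nat.mod_eq_of_lt elt
  have hexp : Nat.log k n - Nat.log k n % m = m * L := by
    rw [e1]
    exact Nat.sub_sub_self hlog1
  have hdiv : (n / k ^ (m * L) < d) ↔ (n < d * k ^ (m * L)) :=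
    Nat.div_lt_iff_lt_mul (Nat.pow_pos (by omega))
  unfold thePred
  rw [hexp, and_iff_right (Nat.pos_of_ne_zero hn), if_congr hdiv rfl rfl]

section Automaton

lemma finmk_val (n x : ℕ) (h : x < n) : (⟨x, h⟩ : Fin n).val = x := rfl

def St (k m q : ℕ) : Type := Fin (k ^ m) × Fin (m + 1) × ZMod m × ZMod q

instance St.fintype (k m q : ℕ) [NeZero m] [NeZero q] : Fintype (St k m q) := by
  unfold St; infer_instance

def q0 (k m q : ℕ) (hK : 0 < k ^ m) : St k m q := (⟨0, hK⟩, ⟨0, Nat.succ_pos m⟩, 0, 0)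

def delta (k m q : ℕ) (hK : 0 < k ^ m) : St k m q → ℕ → St k m q := fun s dg =>
  (if s.2.1.val < m then ⟨(s.1.val * k + dg) % k ^ m, Nat.mod_lt _ hK⟩ else s.1,
   ⟨min (s.2.1.val + 1) m, by omega⟩,
   (if s.2.1.val = 0 then 0 else s.2.2.1 + 1),
   s.2.2.2 * (k : ZMod q) + (dg : ZMod q))

def tau (k m q d a c : ℕ) : St k m q → ℕ := fun s =>
  if s.2.1.val = 0 then 0
  else if s.2.2.2.val < (if s.1.val / k ^ (s.2.1.val - (s.2.2.1.val + 1)) < d then a else c)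
    then 1 else 0

lemma key (k m q : ℕ) (hk : 2 ≤ k) (hm : 0 < m) (hK : 0 < k ^ m) :
    ∀ n : ℕ, n ≠ 0 →
      (((Nat.digits k n).reverse).foldl (delta k m q hK) (q0 k m q hK)).1.val
          = n / k ^ (Nat.log k n + 1 - min (Nat.log k n + 1) m) ∧
      (((Nat.digits k n).reverse).foldl (delta k m q hK) (q0 k m q hK)).2.1.val
          = min (Nat.log k n + 1) m ∧
      (((Nat.digits k n).reverse).foldl (delta k m q hK) (q0 k m q hK)).2.2.1
          = ((Nat.log k n : ℕ) : ZMod m) ∧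
      (((Nat.digits k n).reverse).foldl (delta k m q hK) (q0 k m q hK)).2.2.2
          = (n : ZMod q) := by
  have hk1 : 1 < k := hk
  intro n
  induction n using Nat.strong_induction_on with
  | _ n IH =>
  intro hn
  rw [foldl_digits_step k hk _ _ hn]
  rcases Nat.lt_or_ge n k with hnk | hnk
  · -- single digit
    have hdiv0 : n / k = 0 := Nat.div_eq_of_lt hnk
    rw [hdiv0]
    simp only [Nat.digits_zero, List.reverse_nil, List.foldl_nil]
    have hlog : Nat.log k n = 0 := by
      rw [Nat.log_eq_zero_iff]; exact Or.inl hnk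
    have hmod : n % k = n := Nat.mod_eq_of_lt hnk
    have hkpow : k ≤ k ^ m := by
      calc k = k ^ 1 := (pow_one k).symm
        _ ≤ k ^ m := Nat.pow_le_pow_right (by omega) hm
    have hlt : n < k ^ m := lt_of_lt_of_le hnk hkpow
    simp only [delta, q0]
    refine ⟨?_, ?_, ?_, ?_⟩
    · erw [if_pos hm]
      simp only [finmk_val]
      rw [hlog, hmod]
      rw [show 0 + 1 - min (0 + 1) m = 0 from by omega]
      rw [pow_zero, Nat.div_one, Nat.zero_mul, Nat.zero_add]
      exact Nat.mod_eq_of_lt hlt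
    · rw [hlog]
    · simp [hlog]
    · rw [hmod]
      simp
  · -- at least two digits
    have hn' : n / k ≠ 0 := by
      have := (Nat.one_le_div_iff (show 0 < k by omega)).2 hnk
      omega
    have hltn : n / k < n := Nat.div_lt_self (by omega) (by omega)
    obtain ⟨iht, ihe, ihs, ihr⟩ := IH (n / k) hltn hn'
    have hlog : Nat.log k n = Nat.log k (n / k) + 1 := by
      have hh1 := Nat.log_div_base k n
      have hh2 : 0 < Nat.log k n := Nat.log_pos hk1 hnk
      omega
    set st' := ((Nat.digits k (n / k)).reverse).foldl (delta k m q hK) (q0 k m q hK) with hst'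
    set L' := Nat.log k (n / k) with hL'
    simp only [delta]
    try dsimp only
    refine ⟨?_, ?_, ?_, ?_⟩
    · by_cases hc : st'.2.1.val < m
      · rw [if_pos hc]
        have hlen : L' + 1 < m := by
          rw [ihe] at hc; omega
        have hx : st'.1.val = n / k := by
          rw [iht, show L' + 1 - min (L' + 1) m = 0 from by omega]
          simp
        have hnval : n / k * k + n % k = n := Nat.div_add_mod' n k
        have hnlt : n < k ^ m := by
          have hh : n < k ^ (Nat.log k n + 1) := Nat.lt_pow_succ_log_self hk1 n
          have h3 : k ^ (Nat.log k n + 1) ≤ k ^ m :=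
            Nat.pow_le_pow_right (by omega) (by omega)
          exact lt_of_lt_of_le hh h3
        try simp only [finmk_val]
        rw [hx, hnval, Nat.mod_eq_of_lt hnlt]
        rw [show Nat.log k n + 1 - min (Nat.log k n + 1) m = 0 from by
          rw [hlog]; omega]
        rw [pow_zero, Nat.div_one]
      · rw [if_neg hc]
        have hlen : m ≤ L' + 1 := by
          rw [ihe] at hc; omega
        rw [iht, show min (L' + 1) m = m from by omega]
        rw [Nat.div_div_eq_div_mul, ← pow_succ', hlog]
        rw [show L' + 1 - m + 1 = L' + 1 + 1 - min (L' + 1 + 1) m from by omega]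
    · try simp only [finmk_val]
      rw [ihe, hlog]
      omega
    · rw [if_neg (show ¬(st'.2.1.val = 0) from by rw [ihe]; omega)]
      rw [ihs, hlog]
      push_cast
      ring
    · rw [ihr]
      have e : ((n / k : ℕ) : ZMod q) * (k : ZMod q) + ((n % k : ℕ) : ZMod q)
          = ((n / k * k + n % k : ℕ) : ZMod q) := by push_cast; ring
      rw [e, Nat.div_add_mod']

end Automaton
end AutoDensityAux
namespace AutoDensityAux
open Finset Filter Topology

lemma isAutomatic_thePred (k m d q a c : ℕ) (hk : 2 ≤ k) (hm : 0 < m) (hq : 0 < q) :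
    IsAutomaticSet k {n | thePred k m d q a c n} := by
  haveI : NeZero m := ⟨by omega⟩
  haveI : NeZero q := ⟨by omega⟩
  have hK : 0 < k ^ m := Nat.pow_pos (by omega)
  refine ⟨St k m q, inferInstance, q0 k m q hK, delta k m q hK, tau k m q d a c, fun n => ?_⟩
  rcases eq_or_ne n 0 with rfl | hn
  · have h0 : (0:ℕ) ∉ {n | thePred k m d q a c n} := by
      simp [thePred]
    rw [Set.indicator_of_notMem h0]
    simp only [Nat.digits_zero, List.reverse_nil, List.foldl_nil]
    simp [tau, q0]
  · obtain ⟨ht, he, hs, hr⟩ := key k m q hk hm hK n hn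
    set st := ((Nat.digits k n).reverse).foldl (delta k m q hK) (q0 k m q hK) with hstdef
    have hene : st.2.1.val ≠ 0 := by rw [he]; omega
    have hsval : st.2.2.1.val = Nat.log k n % m := by rw [hs, ZMod.val_natCast]
    have hrval : st.2.2.2.val = n % q := by rw [hr, ZMod.val_natCast]
    have hv : st.1.val / k ^ (st.2.1.val - (st.2.2.1.val + 1))
        = n / k ^ (Nat.log k n - Nat.log k n % m) := by
      rw [ht, he, hsval, Nat.div_div_eq_div_mul, ← pow_add]
      congr 2
      have h1 : Nat.log k n % m < m := Nat.mod_lt _ hm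
      have h2 : Nat.log k n % m ≤ Nat.log k n := Nat.mod_le _ _
      generalize Nat.log k n % m = r at h1 h2 ⊢
      generalize Nat.log k n = x at h2 ⊢
      omega
    have htau : tau k m q d a c st
        = if n % q < (if n / k ^ (Nat.log k n - Nat.log k n % m) < d then a else c)
          then 1 else 0 := by
      unfold tau
      rw [if_neg hene, hrval, hv]
    rw [htau]
    by_cases hP : thePred k m d q a c n
    · rw [Set.indicator_of_mem (by exact hP), if_pos hP.2]
    · rw [Set.indicator_of_notMem (by exact hP),
        if_neg (fun hc => hP ⟨Nat.pos_of_ne_zero hn, hc⟩)]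

lemma piCount_eq (P : ℕ → Prop) [DecidablePred P] (N : ℕ) :
    piCount {n | P n} N = cntF P N := by
  have h : {n | P n} ∩ Set.Iio N = ↑((Finset.range N).filter P) := by
    ext x
    simp only [Set.mem_inter_iff, Set.mem_setOf_eq, Set.mem_Iio, Finset.coe_filter,
      Finset.mem_range]
    tauto
  unfold piCount cntF
  rw [h, Set.ncard_coe_finset]

end AutoDensityAux

open AutoDensityAux Filter Topology

theorem exists_automatic_set_with_given_densities
    (k : ℕ) (hk : 2 ≤ k) (α β : ℚ)
    (hαβ : (0 < α ∧ α ≤ β ∧ β < 1) ∨ (α = 0 ∧ β = 0) ∨ (α = 1 ∧ β = 1)) :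
    ∃ S : Set ℕ, IsAutomaticSet k S ∧
      Filter.atTop.liminf (fun N : ℕ => (piCount S N : ℝ) / N) = (α : ℝ) ∧
      Filter.atTop.limsup (fun N : ℕ => (piCount S N : ℝ) / N) = (β : ℝ) := by
  classical
  rcases hαβ with ⟨hα, hab, hb1⟩ | ⟨ha0, hb0⟩ | ⟨ha1, hb1⟩
  · -- main case : 0 < α ≤ β < 1
    have hα1 : α < 1 := lt_of_le_of_lt hab hb1
    have hβ0 : 0 < β := lt_of_lt_of_le hα hab
    have hApos : 0 < α.num := Rat.num_pos.2 hα
    have hBpos : 0 < β.num := Rat.num_pos.2 hβ0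
    set A : ℕ := α.num.toNat * β.den with hAdef
    set B : ℕ := β.num.toNat * α.den with hBdef
    set d : ℕ := α.den * β.den with hddef
    have hαden : 0 < α.den := α.pos
    have hβden : 0 < β.den := β.pos
    have hdpos : 0 < d := Nat.mul_pos hαden hβden
    have eα : (α:ℝ) * (α.den:ℝ) = ((α.num:ℤ):ℝ) := by
      rw [Rat.cast_def]
      field_simp
    have eβ : (β:ℝ) * (β.den:ℝ) = ((β.num:ℤ):ℝ) := by
      rw [Rat.cast_def]
      field_simp
    have h1A : ((α.num.toNat : ℕ) : ℝ) = ((α.num : ℤ) : ℝ) := by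
      exact_mod_cast congrArg (fun z : ℤ => (z : ℝ)) (Int.toNat_of_nonneg hApos.le)
    have h1B : ((β.num.toNat : ℕ) : ℝ) = ((β.num : ℤ) : ℝ) := by
      exact_mod_cast congrArg (fun z : ℤ => (z : ℝ)) (Int.toNat_of_nonneg hBpos.le)
    have hαR : (α:ℝ) * d = A := by
      rw [hAdef, hddef]
      push_cast
      rw [h1A]
      linear_combination (β.den:ℝ) * eα
    have hβR : (β:ℝ) * d = B := by
      rw [hBdef, hddef]
      push_cast
      rw [h1B]
      linear_combination (α.den:ℝ) * eβ
    have hApos' : 0 < A := Nat.mul_pos (by omega) hβden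
    have hABn : A ≤ B := by
      have h1 : (A:ℝ) ≤ (B:ℝ) := by
        rw [← hαR, ← hβR]
        have h2 : (0:ℝ) ≤ d := by positivity
        apply mul_le_mul_of_nonneg_right _ h2
        exact_mod_cast hab
      exact_mod_cast h1
    have hBdn : B < d := by
      have hdR : (0:ℝ) < d := by exact_mod_cast hdpos
      have h1 : (B:ℝ) < (d:ℝ) := by
        rw [← hβR]
        nlinarith [show ((β:ℝ)) < 1 from by exact_mod_cast hb1]
      exact_mod_cast h1
    have hαden2 : 2 ≤ α.den := by
      rcases Nat.lt_or_ge α.den 2 with h | h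
      · exfalso
        have h1 : α.den = 1 := by omega
        have h2 : (α.num : ℚ) = α := by
          conv_rhs => rw [← Rat.num_div_den α]
          rw [h1]
          simp
        have h3 : (0:ℚ) < (α.num:ℚ) := by rw [h2]; exact hα
        have h4 : ((α.num:ℤ):ℚ) < ((1:ℤ):ℚ) := by push_cast; rw [h2]; exact hα1
        have h5 : (0:ℤ) < α.num := by exact_mod_cast h3
        have h6 : α.num < 1 := by exact_mod_cast h4
        omega
      · exact h
    have hd2 : 2 ≤ d := by
      calc 2 ≤ α.den := hαden2
        _ = α.den * 1 := (Nat.mul_one _).symm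
        _ ≤ α.den * β.den := Nat.mul_le_mul_left _ hβden
    clear_value A B d
    clear hAdef hBdef hddef
    set m : ℕ := B * d + 2 * d + 2 with hmdef
    have hm' : m = B * d + (2 * d + 2) := by rw [hmdef]; ring
    have hm : 0 < m :=
      Nat.lt_of_lt_of_le (by omega : 0 < 2*d+2) (by rw [hm']; exact Nat.le_add_left _ _)
    have hdm : d < m :=
      lt_of_lt_of_le (by omega : d < 2*d+2) (by rw [hm']; exact Nat.le_add_left _ _)
    have hBdm : B * d < m := by
      rw [hm']
      exact Nat.lt_add_of_pos_right (by omega)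
    have h2dm : 2 * d + 2 ≤ m := by rw [hm']; exact Nat.le_add_left _ _
    clear_value m
    clear hmdef hm'
    set M : ℕ := k ^ m with hMdef
    have h2m : 2 ^ m ≤ M := Nat.pow_le_pow_left hk m
    have hmM : m < M := lt_of_lt_of_le (Nat.lt_two_pow_self (n := m)) h2m
    have hdM : d < M := lt_trans hdm hmM
    have hBdM : B * d < M := lt_trans hBdm hmM
    have hAM : B * d ≤ A * M := le_trans hBdM.le (Nat.le_mul_of_pos_left M hApos')
    have hddM : d * d ≤ M := by
      have h1 : d + 1 ≤ 2 ^ (d + 1) := (Nat.lt_two_pow_self (n := d+1)).le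
      have h2 : (d+1) * (d+1) ≤ 2 ^ (d+1) * 2 ^ (d+1) := Nat.mul_le_mul h1 h1
      have h3 : 2 ^ (d+1) * 2 ^ (d+1) = 2 ^ (2*d+2) := by
        rw [← pow_add]
        congr 1
        omega
      have h4 : 2 ^ (2*d+2) ≤ 2 ^ m := Nat.pow_le_pow_right (by omega) h2dm
      have h5 : d * d ≤ (d+1) * (d+1) := Nat.mul_le_mul (by omega) (by omega)
      exact le_trans h5 (le_trans h2 (le_trans (le_of_eq h3) (le_trans h4 h2m)))
    have hblockM : ∀ L n, M ^ L ≤ n → n < M ^ (L+1) →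
        (thePred k m d (d * (d-1) * (M-d)) ((B*d - A) * (M-d)) ((A*M - B*d) * (d-1)) n ↔
          n % (d * (d-1) * (M-d)) <
            (if n < d * M ^ L then (B*d - A) * (M-d) else (A*M - B*d) * (d-1))) := by
      rw [hMdef]
      exact thePred_block k m d _ _ _ hk hm
    clear_value M
    clear hMdef
    set q : ℕ := d * (d-1) * (M-d) with hqdef
    set a : ℕ := (B*d - A) * (M-d) with hadef
    set c : ℕ := (A*M - B*d) * (d-1) with hcdef
    have hMdpos : 0 < M - d := Nat.sub_pos_of_lt hdM
    have hq : 0 < q := by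
      rw [hqdef]
      exact Nat.mul_pos (Nat.mul_pos hdpos (by omega)) hMdpos
    have hABd : A ≤ B * d := le_trans hABn (Nat.le_mul_of_pos_right B hdpos)
    have hd1 : 1 ≤ d := by omega
    have hdMle : d ≤ M := hdM.le
    have ha : a ≤ q := by
      have h1 : B*d - A ≤ d*(d-1) := by
        have h2 : B*d ≤ (d-1)*d := Nat.mul_le_mul_right d (by omega : B ≤ d - 1)
        calc B*d - A ≤ B*d := Nat.sub_le _ _
          _ ≤ (d-1)*d := h2
          _ = d*(d-1) := Nat.mul_comm _ _
      rw [hadef, hqdef]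
      exact Nat.mul_le_mul_right _ h1
    have hc : c ≤ q := by
      have h1 : A*M - B*d ≤ d*(M-d) := by
        have h2 : A*M ≤ (d-1)*M := Nat.mul_le_mul_right M (by omega : A ≤ d-1)
        have h3 : (d-1)*M ≤ d*(M-d) := by
          zify [hdMle, hd1]
          have hc1 : ((d:ℤ)) * d ≤ (M:ℤ) := by exact_mod_cast hddM
          linarith [hc1]
        calc A*M - B*d ≤ A*M := Nat.sub_le _ _
          _ ≤ (d-1)*M := h2
          _ ≤ d*(M-d) := h3
      rw [hcdef, hqdef]
      calc (A*M - B*d)*(d-1) ≤ (d*(M-d))*(d-1) := Nat.mul_le_mul_right _ h1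
        _ = d*(d-1)*(M-d) := by ring
    have hAq : A ≤ q := by
      rw [hqdef]
      calc A ≤ d - 1 := Nat.le_sub_one_of_lt (lt_of_le_of_lt hABn hBdn)
        _ ≤ d*(d-1) := Nat.le_mul_of_pos_left _ hdpos
        _ ≤ d*(d-1)*(M-d) := Nat.le_mul_of_pos_right _ hMdpos
    have hBqda : B*q ≤ d*a := by
      rw [hqdef, hadef]
      zify [hABd, hdMle, hd1]
      have key1 : (0:ℤ) ≤ ((B:ℤ) - A) * ((d:ℤ) * ((M:ℤ) - d)) := by
        apply mul_nonneg
        · have h2 : (A:ℤ) ≤ B := by exact_mod_cast hABn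
          linarith
        · apply mul_nonneg (by positivity)
          have h2 : (d:ℤ) ≤ M := by exact_mod_cast hdMle
          linarith
      linarith [key1]
    have hdcAq : d*c ≤ A*q := by
      rw [hqdef, hcdef]
      zify [hAM, hdMle, hd1]
      have key2 : (0:ℤ) ≤ ((B:ℤ) - A) * ((d:ℤ) * d * ((d:ℤ) - 1)) := by
        apply mul_nonneg
        · have h2 : (A:ℤ) ≤ B := by exact_mod_cast hABn
          linarith
        · have h2 : (1:ℤ) ≤ d := by exact_mod_cast hd1
          have h3 : (0:ℤ) ≤ d := by positivity
          exact mul_nonneg (mul_nonneg h3 h3) (by linarith)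
      linarith [key2]
    have ID1 : A*q + d*a*d = B*q*d + d*a := by
      rw [hqdef, hadef]
      zify [hABd, hdMle, hd1]
      ring
    have ID2 : B*q*d + d*c*M = A*q*M + d*c*d := by
      rw [hqdef, hcdef]
      zify [hAM, hdMle, hd1]
      ring
    have hP0 : ¬ thePred k m d q a c 0 := by
      unfold thePred
      simp
    have hs : Setup (thePred k m d q a c) M d q a c A B :=
      ⟨hq, ha, hc, hd2, hdM, hABn, hAq, hP0, hBqda, hdcAq, ID1, ID2, hblockM⟩
    obtain ⟨hliminf, hlimsup⟩ := hs.density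
    have hfe : (fun N : ℕ => (piCount {n | thePred k m d q a c n} N : ℝ)/N)
        = fun N : ℕ => (cntF (thePred k m d q a c) N : ℝ)/N := by
      funext N
      rw [piCount_eq]
    refine ⟨{n | thePred k m d q a c n}, isAutomatic_thePred k m d q a c hk hm hq, ?_, ?_⟩
    · rw [hfe, hliminf, ← hαR]
      field_simp
    · rw [hfe, hlimsup, ← hβR]
      field_simp
  · -- (0, 0)
    subst ha0 hb0
    refine ⟨∅, ⟨PUnit, inferInstance, PUnit.unit, fun s _ => s, fun _ => 0,
      fun n => by simp⟩, ?_, ?_⟩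
    · have he : (fun N : ℕ => (piCount (∅ : Set ℕ) N : ℝ)/N) = fun _ => (0:ℝ) := by
        funext N
        simp [piCount]
      rw [he, Filter.liminf_const]
      simp
    · have he : (fun N : ℕ => (piCount (∅ : Set ℕ) N : ℝ)/N) = fun _ => (0:ℝ) := by
        funext N
        simp [piCount]
      rw [he, Filter.limsup_const]
      simp
  · -- (1, 1)
    subst ha1 hb1
    have hpc : ∀ N : ℕ, piCount (Set.univ : Set ℕ) N = N := by
      intro N
      unfold piCount
      rw [Set.univ_inter, show (Set.Iio N : Set ℕ) = ↑(Finset.range N) from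
        (Finset.coe_range N).symm, Set.ncard_coe_finset, Finset.card_range]
    have he : ∀ᶠ N in (atTop : Filter ℕ), ((piCount Set.univ N : ℝ)/N) = 1 := by
      refine eventually_atTop.2 ⟨1, fun N hN => ?_⟩
      rw [hpc N]
      exact div_self (by exact_mod_cast (by omega : N ≠ 0))
    refine ⟨Set.univ, ⟨PUnit, inferInstance, PUnit.unit, fun s _ => s, fun _ => 1,
      fun n => by simp⟩, ?_, ?_⟩
    · rw [Filter.liminf_congr he, Filter.liminf_const]
      simp
    · rw [Filter.limsup_congr he, Filter.limsup_const]
      simp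
end

section
/- Let k ≥ 2 be a natural number, let γ be a positive real number, let (s_n) and (s_n') be sequences of positive real numbers, let u', v', u, v be positive real numbers, and let b and c be positive integers. Suppose that (v'·k^{b+c} + u'·k^c + s_n')/(v·k^{b+c} + u·k^c + s_n) → γ as n → ∞, and that limsup_{n→∞} (v'·k^c + s_n')/(v·k^c + s_n) ≤ γ. Then limsup_{n→∞} (v'·k^{2b+c} + u'·(k^{b+c} + k^c) + s_n')/(v·k^{2b+c} + u·(k^{b+c} + k^c) + s_n) ≥ γ. -/
open Filter


lemma key_limsup (γ : ℝ) (hγ : 0 < γ) (A B C D E F : ℕ → ℝ) (lam K : ℝ)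
    (hlam0 : 0 < lam) (hlam1 : lam < 1)
    (hB : ∀ n, 0 < B n) (hD : ∀ n, 0 < D n) (hF : ∀ n, 0 < F n)
    (hA : ∀ n, 0 ≤ A n) (hC : ∀ n, 0 ≤ C n) (hE : ∀ n, 0 ≤ E n)
    (hid1 : ∀ n, A n = lam * E n + (1 - lam) * C n)
    (hid2 : ∀ n, B n = lam * F n + (1 - lam) * D n)
    (hDF : ∀ n, D n ≤ F n)
    (hBD : ∀ n, B n ≤ K * D n)
    (hlim : Tendsto (fun n => A n / B n) atTop (nhds γ))
    (hsup : limsup (fun n => C n / D n) atTop ≤ γ) :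
    γ ≤ limsup (fun n => E n / F n) atTop := by
  have hBF : ∀ n, B n ≤ F n := by
    intro n; rw [hid2 n]; nlinarith [hDF n, hD n]
  -- eventually A/B ≤ γ + 1
  have hev1 : ∀ᶠ n in atTop, A n / B n ≤ γ + 1 :=
    hlim.eventually (eventually_le_nhds (by linarith))
  -- bound E/F pointwise
  have hEF : ∀ n, E n / F n ≤ (A n / B n) / lam := by
    intro n
    have h1 : lam * E n ≤ A n := by rw [hid1 n]; nlinarith [hC n]
    rw [div_div, div_le_div_iff₀ (hF n) (mul_pos (hB n) hlam0)]
    nlinarith [hF n, hBF n, hB n, hE n, mul_le_mul_of_nonneg_left (hBF n) (mul_nonneg hlam0.le (hE n))]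
  have hbE : IsBoundedUnder (· ≤ ·) atTop (fun n => E n / F n) := by
    refine ⟨(γ + 1) / lam, ?_⟩
    rw [eventually_map]
    filter_upwards [hev1] with n hn
    exact (hEF n).trans (by gcongr)
  -- bound C/D pointwise
  have hCD : ∀ n, C n / D n ≤ K * (A n / B n) / (1 - lam) := by
    intro n
    have h1 : (1 - lam) * C n ≤ A n := by rw [hid1 n]; nlinarith [hE n]
    rw [← mul_div_assoc, div_le_div_iff₀ (hD n) (by linarith : (0:ℝ) < 1 - lam),
      div_mul_eq_mul_div, le_div_iff₀ (hB n)]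
    have h2 : (1 - lam) * C n * B n ≤ A n * B n :=
      mul_le_mul_of_nonneg_right h1 (hB n).le
    have h3 : A n * B n ≤ A n * (K * D n) :=
      mul_le_mul_of_nonneg_left (hBD n) (hA n)
    nlinarith
  have hbC : IsBoundedUnder (· ≤ ·) atTop (fun n => C n / D n) := by
    have hK : 0 < K := by nlinarith [hBD 0, hB 0, hD 0]
    refine ⟨K * (γ + 1) / (1 - lam), ?_⟩
    rw [eventually_map]
    filter_upwards [hev1] with n hn
    refine (hCD n).trans ?_
    apply div_le_div_of_nonneg_right _ (by linarith)
    nlinarith [hn]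
  -- main argument: by contradiction
  by_contra hcon
  push_neg at hcon
  set L := limsup (fun n => E n / F n) atTop with hL
  set t := (L + γ) / 2 with ht
  have hLt : L < t := by rw [ht]; linarith
  have htγ : t < γ := by rw [ht]; linarith
  set d := γ - t with hd
  have hd0 : 0 < d := by simp [hd]; linarith
  set ε := lam * d / 2 with hε
  have hε0 : 0 < ε := by positivity
  have h1 : ∀ᶠ n in atTop, E n / F n < t := eventually_lt_of_limsup_lt hLt hbE
  have h2 : ∀ᶠ n in atTop, C n / D n < γ + ε :=
    eventually_lt_of_limsup_lt (lt_of_le_of_lt hsup (by linarith)) hbC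
  set β := γ + ε - lam * (γ + ε - t) with hβ
  have hβγ : β < γ := by
    rw [hβ]
    have : γ + ε - t = ε + d := by rw [hd]; ring
    rw [this]
    nlinarith
  have h3 : ∀ᶠ n in atTop, β < A n / B n :=
    hlim.eventually (eventually_gt_nhds hβγ)
  have h4 : ∀ᶠ n in atTop, A n / B n ≤ β := by
    filter_upwards [h1, h2] with n hn1 hn2
    have hEn : E n ≤ t * F n := by
      rw [div_lt_iff₀ (hF n)] at hn1; linarith
    have hCn : C n ≤ (γ + ε) * D n := by
      rw [div_lt_iff₀ (hD n)] at hn2; linarith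
    rw [div_le_iff₀ (hB n)]
    have key : β * B n - A n =
        lam * (1 - lam) * (γ + ε - t) * (F n - D n)
        + lam * (t * F n - E n) + (1 - lam) * ((γ + ε) * D n - C n) := by
      rw [hβ, hid1 n, hid2 n]; ring
    nlinarith [mul_nonneg (mul_nonneg (mul_nonneg hlam0.le (by linarith : (0:ℝ) ≤ 1 - lam)) (by linarith : (0:ℝ) ≤ γ + ε - t)) (by linarith [hDF n] : (0:ℝ) ≤ F n - D n), mul_nonneg hlam0.le (by linarith : (0:ℝ) ≤ t * F n - E n), mul_nonneg (by linarith : (0:ℝ) ≤ 1 - lam) (by linarith : (0:ℝ) ≤ (γ + ε) * D n - C n)]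
  obtain ⟨n, hn3, hn4⟩ := (h3.and h4).exists
  linarith

theorem limsup_lemma
    (k : ℕ) (hk : 2 ≤ k) (γ : ℝ) (hγ : 0 < γ)
    (s s' : ℕ → ℝ) (hs : ∀ n, 0 < s n) (hs' : ∀ n, 0 < s' n)
    (u' v' u v : ℝ) (hu' : 0 < u') (hv' : 0 < v') (hu : 0 < u) (hv : 0 < v)
    (b c : ℕ) (hb : 0 < b) (hc : 0 < c)
    (hlim : Filter.Tendsto
      (fun n : ℕ => (v' * (k : ℝ) ^ (b + c) + u' * (k : ℝ) ^ c + s' n) /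
        (v * (k : ℝ) ^ (b + c) + u * (k : ℝ) ^ c + s n)) Filter.atTop (nhds γ))
    (hsup : Filter.atTop.limsup
      (fun n : ℕ => (v' * (k : ℝ) ^ c + s' n) / (v * (k : ℝ) ^ c + s n)) ≤ γ) :
    γ ≤ Filter.atTop.limsup
      (fun n : ℕ => (v' * (k : ℝ) ^ (2 * b + c) + u' * ((k : ℝ) ^ (b + c) + (k : ℝ) ^ c) + s' n) /
        (v * (k : ℝ) ^ (2 * b + c) + u * ((k : ℝ) ^ (b + c) + (k : ℝ) ^ c) + s n)) := by
  have hk1 : (1:ℝ) ≤ (k:ℝ) := by exact_mod_cast Nat.one_le_of_lt hk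
  set P : ℝ := (k:ℝ) ^ b with hPdef
  set Q : ℝ := (k:ℝ) ^ c with hQdef
  have hP1 : (1:ℝ) ≤ P := one_le_pow₀ hk1
  have hQ0 : (0:ℝ) < Q := pow_pos (by linarith) c
  have e1 : (k:ℝ) ^ (b + c) = P * Q := pow_add _ b c
  have e2 : (k:ℝ) ^ (2 * b + c) = P * (P * Q) := by
    rw [two_mul, add_assoc, pow_add, e1]
  have hP0 : (0:ℝ) < P := by linarith
  refine key_limsup γ hγ _ _ _ _ _ _ (1 / (P + 1)) ((v * P + u + v) / v)
    (by positivity) ?_ ?_ ?_ ?_ ?_ ?_ ?_ ?_ ?_ ?_ ?_ hlim hsup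
  · rw [div_lt_one (by linarith)]; linarith
  · intro n; have := hs n; rw [e1]
    nlinarith [mul_pos hv (mul_pos hP0 hQ0), mul_pos hu hQ0]
  · intro n; have := hs n; nlinarith [mul_pos hv hQ0]
  · intro n; have := hs n; rw [e1, e2]
    nlinarith [mul_pos hv (mul_pos hP0 (mul_pos hP0 hQ0)), mul_pos hu (mul_pos hP0 hQ0), mul_pos hu hQ0]
  · intro n; have := hs' n; rw [e1]
    nlinarith [mul_pos hv' (mul_pos hP0 hQ0), mul_pos hu' hQ0]
  · intro n; have := hs' n; nlinarith [mul_pos hv' hQ0]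
  · intro n; have := hs' n; rw [e1, e2]
    nlinarith [mul_pos hv' (mul_pos hP0 (mul_pos hP0 hQ0)), mul_pos hu' (mul_pos hP0 hQ0), mul_pos hu' hQ0]
  · intro n
    rw [e1, e2]
    have hne : P + 1 ≠ 0 := by linarith
    field_simp
    ring
  · intro n
    rw [e1, e2]
    have hne : P + 1 ≠ 0 := by linarith
    field_simp
    ring
  · intro n; have := hs n; rw [e1, e2]
    nlinarith [mul_nonneg (mul_pos hv hQ0).le (by nlinarith : (0:ℝ) ≤ P * P - 1),
      mul_pos hu (mul_pos hP0 hQ0), mul_pos hu hQ0]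
  · intro n
    have hsn := hs n
    rw [e1, div_mul_eq_mul_div, le_div_iff₀ hv]
    nlinarith [mul_pos (mul_pos hv hP0) hsn, mul_pos hu hsn, mul_pos (mul_pos hv hv) hQ0]
end

section
/- Adopt the setup in the context, and suppose A, B, C ∈ Σ_k* are nonempty words whose lengths are multiples of a, such that A has no leading zeros, γ_j(ABC) = γ, and δ(1, A) = δ(1, AB) = δ(1, ABC). Then γ_j(AB²C) = γ, where AB²C denotes the concatenation of A, B, B, C. -/
open Filter

/-- The finset of all words of length `n` over the alphabet `Σ_k = {0, …, k-1}`,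
represented as lists of natural numbers (most significant digit first). -/
def kwords (k n : ℕ) : Finset (List ℕ) :=
  Finset.image (fun g : Fin n → Fin k => List.ofFn (fun i => (g i : ℕ))) Finset.univ

/-- `wordVal k w` is `[w]_k`, the natural number obtained by evaluating the word `w`
as a base-`k` numeral (most significant digit first), with `[ε]_k = 0`. -/
def wordVal (k : ℕ) (w : List ℕ) : ℕ := w.foldl (fun acc d => k * acc + d) 0

/-- `sWord k g w = ∑_{v ≺ w, |v| = |w|} g v`, where `≺` is the lexicographic (equivalently,
numeric-value) strict order on words of equal length over `Σ_k`. -/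
def sWord (k : ℕ) (g : List ℕ → ℚ) (w : List ℕ) : ℚ :=
  ∑ v ∈ (kwords k w.length).filter (fun v => wordVal k v < wordVal k w), g v

/-- The filter of words `w` over `Σ_k` with `|w| ≡ j (mod a)`, as `|w| → ∞`. -/
def wordFilter (k a j : ℕ) : Filter (List ℕ) :=
  (Filter.atTop.comap List.length) ⊓
    Filter.principal {w : List ℕ | (∀ x ∈ w, x < k) ∧ w.length % a = j}

/-- `gammaJ k a j s u` is `γ_j(u)`: the limit superior of `s([uw]_k)/[uw]_k` over words `w`
over `Σ_k` with `|w| ≡ j (mod a)`, as `|w| → ∞`. -/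
noncomputable def gammaJ (k a j : ℕ) (s : ℕ → ℚ) (u : List ℕ) : ℝ :=
  Filter.limsup
    (fun w : List ℕ => (s (wordVal k (u ++ w)) : ℝ) / (wordVal k (u ++ w)))
    (wordFilter k a j)

/-! ### Auxiliary lemmas on words and values -/

lemma wordVal_foldl_acc (k : ℕ) : ∀ (t : List ℕ) (c : ℕ),
    t.foldl (fun acc d => k * acc + d) c = c * k ^ t.length + wordVal k t := by
  intro t
  induction t with
  | nil => intro c; simp [wordVal]
  | cons x t ih =>
      intro c
      have h2 := ih (k * c + x)
      have h3 := ih x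
      simp only [List.foldl_cons, wordVal, List.length_cons] at *
      rw [h2, show k * 0 + x = x by ring, h3]; ring

lemma wordVal_cons (k x : ℕ) (t : List ℕ) :
    wordVal k (x :: t) = x * k ^ t.length + wordVal k t := by
  simp only [wordVal, List.foldl_cons]
  simpa [wordVal] using wordVal_foldl_acc k t x

lemma wordVal_append (k : ℕ) (p t : List ℕ) :
    wordVal k (p ++ t) = wordVal k p * k ^ t.length + wordVal k t := by
  simp only [wordVal, List.foldl_append]
  exact wordVal_foldl_acc k t _

lemma wordVal_zeros (k m : ℕ) : wordVal k (List.replicate m 0) = 0 := by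
  induction m with
  | zero => rfl
  | succ n ih => rw [List.replicate_succ, wordVal_cons, ih]; ring

lemma wordVal_lt (k : ℕ) (hk : 2 ≤ k) : ∀ (w : List ℕ), (∀ x ∈ w, x < k) →
    wordVal k w < k ^ w.length := by
  intro w
  induction w with
  | nil => intro _; simp [wordVal]
  | cons x t ih =>
      intro h
      have hx : x < k := h x (by simp)
      have ht := ih (fun y hy => h y (by simp [hy]))
      rw [wordVal_cons]
      calc x * k ^ t.length + wordVal k t < x * k ^ t.length + k ^ t.length := by omega
        _ = (x + 1) * k ^ t.length := by ring
        _ ≤ k * k ^ t.length := Nat.mul_le_mul_right _ (by omega)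
        _ = k ^ (x :: t).length := by rw [List.length_cons]; ring

lemma ofDigits_eq_wordVal (k : ℕ) : ∀ (l : List ℕ), Nat.ofDigits k l = wordVal k l.reverse := by
  intro l
  induction l with
  | nil => simp [wordVal]
  | cons x l ih =>
      rw [Nat.ofDigits_cons, List.reverse_cons, wordVal_append, ih]
      simp [wordVal_cons, wordVal]
      ring

lemma digits_reverse_eq (k : ℕ) (hk : 2 ≤ k) (w : List ℕ) (hw : w ≠ [])
    (hdig : ∀ x ∈ w, x < k) (hlead : w.head? ≠ some 0) :
    (Nat.digits k (wordVal k w)).reverse = w := by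
  have h1 : Nat.digits k (Nat.ofDigits k w.reverse) = w.reverse := by
    apply Nat.digits_ofDigits k (by omega)
    · intro x hx; exact hdig x (List.mem_reverse.mp hx)
    · intro h
      rw [List.getLast_reverse]
      intro h0
      apply hlead
      rw [List.head?_eq_head hw, h0]
  rw [ofDigits_eq_wordVal, List.reverse_reverse] at h1
  rw [h1, List.reverse_reverse]

lemma mem_kwords {k n : ℕ} {v : List ℕ} :
    v ∈ kwords k n ↔ v.length = n ∧ ∀ x ∈ v, x < k := by
  constructor
  · intro h
    rw [kwords, Finset.mem_image] at h
    obtain ⟨g, -, rfl⟩ := h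
    constructor
    · simp
    · intro x hx
      rw [List.mem_ofFn] at hx
      obtain ⟨i, rfl⟩ := hx
      exact (g i).isLt
  · rintro ⟨rfl, hdig⟩
    rw [kwords, Finset.mem_image]
    refine ⟨fun i => ⟨v.get i, hdig _ (List.get_mem v i)⟩, Finset.mem_univ _, ?_⟩
    simp [List.ofFn_getElem]

lemma kwords_succ (k n : ℕ) :
    kwords k (n + 1) = (Finset.range k ×ˢ kwords k n).image (fun p => p.1 :: p.2) := by
  ext v
  rw [mem_kwords, Finset.mem_image]
  constructor
  · rintro ⟨hlen, hdig⟩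
    cases v with
    | nil => simp at hlen
    | cons x t =>
        refine ⟨(x, t), ?_, rfl⟩
        rw [Finset.mem_product, Finset.mem_range, mem_kwords]
        exact ⟨hdig x (by simp), by simpa using hlen, fun y hy => hdig y (by simp [hy])⟩
  · rintro ⟨⟨x, t⟩, hp, rfl⟩
    rw [Finset.mem_product, Finset.mem_range, mem_kwords] at hp
    exact ⟨by simp [hp.2.1], fun y hy => by
      rcases List.mem_cons.mp hy with h | h
      · exact h ▸ hp.1
      · exact hp.2.2 y h⟩

lemma sum_kwords_succ (k n : ℕ) (G : List ℕ → ℚ) :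
    ∑ v ∈ kwords k (n+1), G v = ∑ y ∈ Finset.range k, ∑ v ∈ kwords k n, G (y :: v) := by
  rw [kwords_succ, Finset.sum_image, Finset.sum_product]
  rintro ⟨x, t⟩ - ⟨x', t'⟩ - h
  simpa using h

/-! ### Peeling lemmas for `sWord` -/

def Fsum (k : ℕ) {d : ℕ} (f : Fin d → List ℕ → ℚ) (i : Fin d) (m : ℕ) : ℚ :=
  ∑ v ∈ kwords k m, f i v

section Peel

variable {k : ℕ} (hk : 2 ≤ k) {d : ℕ} (f : Fin d → List ℕ → ℚ) (δ : Fin d → ℕ → Fin d)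
  (hδ : ∀ i : Fin d, ∀ x < k, ∀ w, f i (x :: w) = f (δ i x) w)

include hk hδ in
lemma sWord_cons_peel (i : Fin d) (x : ℕ) (hx : x < k) (t : List ℕ) (ht : ∀ y ∈ t, y < k) :
    sWord k (f i) (x :: t) =
      sWord k (f i) (x :: List.replicate t.length 0) + sWord k (f (δ i x)) t := by
  have hvt : wordVal k t < k ^ t.length := wordVal_lt k hk t ht
  simp only [sWord, Finset.sum_filter, List.length_cons, List.length_replicate]
  rw [sum_kwords_succ, sum_kwords_succ]
  have key : ∀ y ∈ Finset.range k, ∀ v ∈ kwords k t.length,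
      (if wordVal k (y :: v) < wordVal k (x :: t) then f i (y :: v) else 0) =
      (if wordVal k (y :: v) < wordVal k (x :: List.replicate t.length 0)
        then f i (y :: v) else 0) +
      (if y = x ∧ wordVal k v < wordVal k t then f i (y :: v) else 0) := by
    intro y _ v hv
    obtain ⟨hvlen, hvdig⟩ := mem_kwords.mp hv
    have hvv : wordVal k v < k ^ t.length := hvlen ▸ wordVal_lt k hk v hvdig
    rw [wordVal_cons, wordVal_cons, wordVal_cons, wordVal_zeros, hvlen, List.length_replicate]
    have hiff : y * k ^ t.length + wordVal k v < x * k ^ t.length + wordVal k t ↔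
        y < x ∨ (y = x ∧ wordVal k v < wordVal k t) := by
      constructor
      · intro h
        rcases lt_trichotomy y x with h' | rfl | h'
        · exact Or.inl h'
        · exact Or.inr ⟨rfl, by omega⟩
        · exfalso
          have : (x + 1) * k ^ t.length ≤ y * k ^ t.length := Nat.mul_le_mul_right _ (by omega)
          nlinarith
      · rintro (h | ⟨rfl, h⟩)
        · have : (y + 1) * k ^ t.length ≤ x * k ^ t.length := Nat.mul_le_mul_right _ (by omega)
          nlinarith
        · omega
    have h0 : y * k ^ t.length + wordVal k v < x * k ^ t.length + 0 ↔ y < x := by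
      constructor
      · intro h
        by_contra h'
        have : x * k ^ t.length ≤ y * k ^ t.length := Nat.mul_le_mul_right _ (by omega)
        omega
      · intro h
        have : (y + 1) * k ^ t.length ≤ x * k ^ t.length := Nat.mul_le_mul_right _ (by omega)
        nlinarith
    simp only [hiff, h0]
    by_cases h1 : y < x
    · have : ¬(y = x ∧ wordVal k v < wordVal k t) := by omega
      simp [h1, this]
    · by_cases h2 : y = x ∧ wordVal k v < wordVal k t
      · simp [h1, h2]
      · simp [h1, h2]
  rw [Finset.sum_congr rfl (fun y hy => Finset.sum_congr rfl (fun v hv => key y hy v hv))]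
  simp only [Finset.sum_add_distrib]
  congr 1
  rw [Finset.sum_comm]
  apply Finset.sum_congr rfl
  intro v hv
  rw [Finset.sum_eq_single_of_mem x (Finset.mem_range.mpr hx)]
  · simp only [true_and, if_pos rfl]
    by_cases h : wordVal k v < wordVal k t
    · simp [h, hδ i x hx v]
    · simp [h]
  · intro y _ hyx
    simp [hyx]

include hk hδ in
lemma sWord_peel : ∀ (p : List ℕ) (i : Fin d) (t : List ℕ), (∀ y ∈ p, y < k) →
    (∀ y ∈ t, y < k) →
    sWord k (f i) (p ++ t) =
      sWord k (f i) (p ++ List.replicate t.length 0) + sWord k (f (p.foldl δ i)) t := by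
  intro p
  induction p with
  | nil =>
      intro i t _ ht
      simp only [List.nil_append, List.foldl_nil]
      have : sWord k (f i) (List.replicate t.length 0) = 0 := by
        rw [sWord]
        rw [Finset.filter_false_of_mem, Finset.sum_empty]
        intro v _
        simp [wordVal_zeros]
      rw [this, zero_add]
  | cons x p' ih =>
      intro i t hp ht
      have hx : x < k := hp x (by simp)
      have hp' : ∀ y ∈ p', y < k := fun y hy => hp y (by simp [hy])
      have hzt : ∀ y ∈ (List.replicate t.length (0:ℕ)), y < k := by
        intro y hy; rw [List.eq_of_mem_replicate hy]; omega
      have hpt : ∀ y ∈ p' ++ t, y < k := by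
        intro y hy; rcases List.mem_append.mp hy with h | h
        · exact hp' y h
        · exact ht y h
      have hpz : ∀ y ∈ p' ++ List.replicate t.length (0:ℕ), y < k := by
        intro y hy; rcases List.mem_append.mp hy with h | h
        · exact hp' y h
        · exact hzt y h
      have l1 : (p' ++ t).length = p'.length + t.length := by simp
      have l2 : (p' ++ List.replicate t.length (0:ℕ)).length = p'.length + t.length := by simp
      rw [List.cons_append, sWord_cons_peel hk f δ hδ i x hx (p' ++ t) hpt]
      rw [ih (δ i x) t hp' ht]
      rw [List.cons_append, sWord_cons_peel hk f δ hδ i x hx _ hpz]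
      rw [l1, l2, List.foldl_cons]
      ring

include hk hδ in
lemma sWord_digit_zeros (i : Fin d) (x : ℕ) (hx : x < k) (m : ℕ) :
    sWord k (f i) (x :: List.replicate m 0) =
      ∑ y ∈ Finset.range x, Fsum k f (δ i y) m := by
  simp only [sWord, Finset.sum_filter, List.length_cons, List.length_replicate]
  rw [sum_kwords_succ]
  have key : ∀ y ∈ Finset.range k, ∀ v ∈ kwords k m,
      (if wordVal k (y :: v) < wordVal k (x :: List.replicate m 0) then f i (y :: v) else 0)
      = (if y < x then f (δ i y) v else 0) := by
    intro y hy v hv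
    obtain ⟨hvlen, hvdig⟩ := mem_kwords.mp hv
    have hvv : wordVal k v < k ^ m := hvlen ▸ wordVal_lt k hk v hvdig
    rw [wordVal_cons, wordVal_cons, wordVal_zeros, hvlen, List.length_replicate]
    have h0 : y * k ^ m + wordVal k v < x * k ^ m + 0 ↔ y < x := by
      constructor
      · intro h
        by_contra h'
        have : x * k ^ m ≤ y * k ^ m := Nat.mul_le_mul_right _ (by omega)
        omega
      · intro h
        have : (y + 1) * k ^ m ≤ x * k ^ m := Nat.mul_le_mul_right _ (by omega)
        nlinarith
    simp only [h0]
    by_cases h : y < x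
    · simp [h, hδ i y (Finset.mem_range.mp hy) v]
    · simp [h]
  rw [Finset.sum_congr rfl (fun y hy => Finset.sum_congr rfl (fun v hv => key y hy v hv))]
  have step : ∀ y ∈ Finset.range k,
      (∑ v ∈ kwords k m, if y < x then f (δ i y) v else 0)
        = if y < x then Fsum k f (δ i y) m else 0 := by
    intro y _
    split <;> simp [Fsum]
  rw [Finset.sum_congr rfl step, ← Finset.sum_filter]
  congr 1
  ext y
  simp only [Finset.mem_filter, Finset.mem_range]
  omega

end Peel

/-! ### Geometric recursion and arithmetic progressions -/

lemma geom_rec_bound (E : ℕ → ℝ) (q c η ρ : ℝ) (hq : 0 ≤ q) (hc : 0 ≤ c)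
    (hη : 0 ≤ η) (hqρ : q < ρ) (hηρ : η ≤ ρ) (hE0 : 0 ≤ E 0)
    (hrec : ∀ m, E (m+1) ≤ q * E m + c * η^m) :
    ∀ m, E m ≤ (E 0 + c/(ρ-q)) * ρ^m := by
  have hρq : 0 < ρ - q := by linarith
  intro m
  induction m with
  | zero =>
      simp only [pow_zero, mul_one]
      have : 0 ≤ c/(ρ-q) := div_nonneg hc (le_of_lt hρq)
      linarith
  | succ m ih =>
      have hρpos : 0 < ρ := lt_of_le_of_lt hq hqρ
      have hρm : (0:ℝ) ≤ ρ^m := le_of_lt (pow_pos hρpos m)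
      have hηm : η^m ≤ ρ^m := pow_le_pow_left₀ hη hηρ m
      have h1 : E (m+1) ≤ q * E m + c * η^m := hrec m
      have h2 : q * E m ≤ q * ((E 0 + c/(ρ-q)) * ρ^m) := by
        apply mul_le_mul_of_nonneg_left ih hq
      have h3 : c * η^m ≤ c * ρ^m := mul_le_mul_of_nonneg_left hηm hc
      have hK : c ≤ (E 0 + c/(ρ-q)) * (ρ - q) := by
        have : c/(ρ-q) * (ρ-q) = c := div_mul_cancel₀ c (ne_of_gt hρq)
        nlinarith
      calc E (m+1) ≤ q * ((E 0 + c/(ρ-q)) * ρ^m) + c * ρ^m := by linarith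
        _ ≤ (E 0 + c/(ρ-q)) * ρ^(m+1) := by rw [pow_succ]; nlinarith

lemma exists_prog (a r m N : ℕ) (ha : 0 < a) (hmod : m % a = r % a) (hge : r + a * N ≤ m) :
    ∃ n, N ≤ n ∧ m = r % a + n * a := by
  refine ⟨m / a, ?_, ?_⟩
  · have h1 := Nat.div_add_mod m a
    have h2 : a * N ≤ a * (m / a) := by
      have : r % a < a := Nat.mod_lt _ ha
      have hr : r % a ≤ r := Nat.mod_le _ _
      omega
    exact Nat.le_of_mul_le_mul_left h2 ha
  · have h1 := Nat.div_add_mod m a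
    rw [hmod, Nat.mul_comm] at h1
    omega

/-! ### Regularity of `Fsum` from the Perron hypothesis -/

section Analytic

variable {k : ℕ} (hk : 2 ≤ k) {d : ℕ} (hd : 0 < d)
  (f : Fin d → List ℕ → ℚ) (δ : Fin d → ℕ → Fin d)
  (hδ : ∀ i : Fin d, ∀ x < k, ∀ w, f i (x :: w) = f (δ i x) w)

include hδ in
lemma Frecur (i : Fin d) (m : ℕ) :
    Fsum k f i (m+1) = ∑ x ∈ Finset.range k, Fsum k f (δ i x) m := by
  rw [Fsum, sum_kwords_succ]
  apply Finset.sum_congr rfl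
  intro x hx
  rw [Fsum]
  exact Finset.sum_congr rfl fun v _ => hδ i x (Finset.mem_range.mp hx) v

include hk hd hδ in
lemma Flim (a : ℕ) (ha : 1 ≤ a) (β C₀ : ℝ) (hβ0 : 0 < β) (hβk : β < (k:ℝ)) (hC₀ : 0 < C₀)
    (c : Fin d → ℕ → ℚ)
    (hP : ∀ (i : Fin d) (m : ℕ),
      |((Fsum k f (δ i 0) m : ℚ) : ℝ) - (c i (m % a) : ℝ) * (k:ℝ)^m| ≤ C₀ * β^(m - m % a)) :
    ∀ (i : Fin d) (r : ℕ), ∃ ℓ : ℝ, Tendsto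
      (fun n : ℕ => ((Fsum k f i (r + n * a) : ℚ) : ℝ) / (k:ℝ)^(r + n * a)) atTop (nhds ℓ) := by
  haveI : Nonempty (Fin d) := ⟨⟨0, hd⟩⟩
  have hk0 : (0:ℝ) < k := by positivity
  have hk1 : (1:ℝ) < k := by exact_mod_cast lt_of_lt_of_le one_lt_two (by exact_mod_cast hk)
  set η : ℝ := β / k with hηdef
  have hη0 : 0 < η := div_pos hβ0 hk0
  have hη1 : η < 1 := (div_lt_one hk0).mpr hβk
  set g : Fin d → ℕ → ℝ := fun i m => ((Fsum k f i m : ℚ) : ℝ) / (k:ℝ)^m with hgdef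
  set C₂ : ℝ := C₀ * (max 1 β⁻¹)^a with hC₂def
  have hmax1 : (1:ℝ) ≤ max 1 β⁻¹ := le_max_left _ _
  have hC₂0 : 0 < C₂ := by
    apply mul_pos hC₀
    exact pow_pos (lt_of_lt_of_le one_pos hmax1) a
  have perr : ∀ (i : Fin d) (m : ℕ), |g (δ i 0) m - (c i (m % a) : ℝ)| ≤ C₂ * η^m := by
    intro i m
    have hkm : (0:ℝ) < (k:ℝ)^m := by positivity
    have h1 : |g (δ i 0) m - (c i (m % a) : ℝ)| =
        |((Fsum k f (δ i 0) m : ℚ) : ℝ) - (c i (m % a) : ℝ) * (k:ℝ)^m| / (k:ℝ)^m := by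
      simp only [hgdef]
      rw [show ((Fsum k f (δ i 0) m : ℚ) : ℝ) / (k:ℝ)^m - (c i (m % a) : ℝ) =
        (((Fsum k f (δ i 0) m : ℚ) : ℝ) - (c i (m % a) : ℝ) * (k:ℝ)^m) / (k:ℝ)^m by
          field_simp]
      rw [abs_div, abs_of_pos hkm]
    rw [h1]
    rw [div_le_iff₀ hkm]
    refine le_trans (hP i m) ?_
    have hηk : η^m * (k:ℝ)^m = β^m := by
      rw [hηdef, div_pow, div_mul_cancel₀]
      positivity
    rw [mul_assoc, hηk, hC₂def, mul_assoc]
    apply mul_le_mul_of_nonneg_left _ (le_of_lt hC₀)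
    have hr_le_m : m % a ≤ m := Nat.mod_le _ _
    have hr_le_a : m % a ≤ a := le_of_lt (Nat.mod_lt _ (by omega))
    have hsplit : β^m = β^(m - m % a) * β^(m % a) := by
      rw [← pow_add]
      congr 1
      omega
    rw [hsplit, ← mul_assoc, mul_comm ((max 1 β⁻¹)^a) _, mul_assoc]
    nth_rewrite 1 [← mul_one (β^(m - m%a))]
    apply mul_le_mul_of_nonneg_left _ (by positivity)
    have h2 : (1:ℝ) ≤ (max 1 β⁻¹) * β := by
      rcases le_total β 1 with h | h
      · have : max 1 β⁻¹ = β⁻¹ := max_eq_right ((one_le_inv₀ hβ0).mpr h)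
        rw [this, inv_mul_cancel₀ (ne_of_gt hβ0)]
      · nlinarith [hmax1]
    calc (1:ℝ) = 1^(m % a) := (one_pow _).symm
      _ ≤ ((max 1 β⁻¹) * β)^(m % a) := pow_le_pow_left₀ zero_le_one h2 _
      _ = (max 1 β⁻¹)^(m % a) * β^(m % a) := mul_pow _ _ _
      _ ≤ (max 1 β⁻¹)^a * β^(m % a) := by
          apply mul_le_mul_of_nonneg_right _ (by positivity)
          exact pow_le_pow_right₀ hmax1 hr_le_a
  have diff0 : ∀ (i : Fin d) (m : ℕ), |g (δ i 0) (m+a) - g (δ i 0) m| ≤ 2*C₂ * η^m := by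
    intro i m
    have e1 := perr i (m+a)
    have e2 := perr i m
    rw [Nat.add_mod_right] at e1
    have hmono : η^(m+a) ≤ η^m :=
      pow_le_pow_of_le_one (le_of_lt hη0) (le_of_lt hη1) (by omega)
    calc |g (δ i 0) (m+a) - g (δ i 0) m|
        ≤ |g (δ i 0) (m+a) - (c i (m % a) : ℝ)| + |g (δ i 0) m - (c i (m % a) : ℝ)| := by
          rw [show g (δ i 0) (m+a) - g (δ i 0) m =
            (g (δ i 0) (m+a) - (c i (m % a) : ℝ)) - (g (δ i 0) m - (c i (m % a) : ℝ)) by ring]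
          exact abs_sub _ _
      _ ≤ C₂ * η^(m+a) + C₂ * η^m := add_le_add e1 e2
      _ ≤ 2*C₂ * η^m := by nlinarith
  have gstep : ∀ (i : Fin d) (m : ℕ), g i (m+1) = (∑ x ∈ Finset.range k, g (δ i x) m) / k := by
    intro i m
    rw [hgdef]
    simp only
    rw [Frecur f δ hδ i m]
    push_cast
    rw [Finset.sum_div, Finset.sum_div]
    apply Finset.sum_congr rfl
    intro x _
    rw [div_div, ← pow_succ]
  set E : ℕ → ℝ := fun m => Finset.univ.sup' Finset.univ_nonempty
      (fun i : Fin d => |g i (m+a) - g i m|) with hEdef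
  have hE_ge : ∀ (i : Fin d) (m : ℕ), |g i (m+a) - g i m| ≤ E m := by
    intro i m
    simp only [hEdef]
    exact Finset.le_sup' (fun i : Fin d => |g i (m+a) - g i m|) (Finset.mem_univ i)
  have hE0 : 0 ≤ E 0 := le_trans (abs_nonneg _) (hE_ge (Classical.arbitrary _) 0)
  set q : ℝ := ((k:ℝ) - 1)/k with hqdef
  have hq0 : 0 ≤ q := by
    apply div_nonneg _ (le_of_lt hk0)
    linarith
  have hq1 : q < 1 := by
    rw [div_lt_one hk0]; linarith
  have Erec : ∀ m, E (m+1) ≤ q * E m + (2*C₂/k) * η^m := by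
    intro m
    apply Finset.sup'_le
    intro i _
    have key : g i (m+1+a) - g i (m+1) =
        (∑ x ∈ Finset.range k, (g (δ i x) (m+a) - g (δ i x) m)) / k := by
      rw [show m+1+a = (m+a)+1 by omega, gstep, gstep, Finset.sum_sub_distrib, sub_div]
    rw [key, abs_div, abs_of_pos hk0]
    rw [div_le_iff₀ hk0]
    have habs : |∑ x ∈ Finset.range k, (g (δ i x) (m+a) - g (δ i x) m)| ≤
        ∑ x ∈ Finset.range k, |g (δ i x) (m+a) - g (δ i x) m| :=
      Finset.abs_sum_le_sum_abs _ _
    refine le_trans habs ?_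
    have hsplit : ∑ x ∈ Finset.range k, |g (δ i x) (m+a) - g (δ i x) m| =
        |g (δ i 0) (m+a) - g (δ i 0) m| +
        ∑ x ∈ Finset.range (k-1), |g (δ i (x+1)) (m+a) - g (δ i (x+1)) m| := by
      rw [show k = (k-1)+1 by omega, Finset.sum_range_succ']
      simp only [Nat.add_sub_cancel]
      ring
    rw [hsplit]
    have hbound : ∑ x ∈ Finset.range (k-1), |g (δ i (x+1)) (m+a) - g (δ i (x+1)) m| ≤
        (k-1) * E m := by
      calc ∑ x ∈ Finset.range (k-1), |g (δ i (x+1)) (m+a) - g (δ i (x+1)) m|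
          ≤ ∑ _x ∈ Finset.range (k-1), E m :=
            Finset.sum_le_sum (fun x _ => hE_ge (δ i (x+1)) m)
        _ = ((k:ℕ)-1 : ℕ) * E m := by rw [Finset.sum_const, Finset.card_range, nsmul_eq_mul]
        _ = ((k:ℝ)-1) * E m := by
            congr 1
            have : ((k - 1 : ℕ) : ℝ) = (k:ℝ) - 1 := by
              push_cast [Nat.cast_sub (by omega : 1 ≤ k)]
              ring
            rw [this]
    have h2 := diff0 i m
    have : (q * E m + 2*C₂/k * η^m) * k = (k-1) * E m + 2*C₂*η^m := by
      rw [hqdef]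
      field_simp
    rw [this]
    linarith
  set M : ℝ := max q η with hM
  set ρ : ℝ := (M + 1)/2 with hρdef
  have hM1 : M < 1 := max_lt hq1 hη1
  have hM0 : 0 ≤ M := le_trans hq0 (le_max_left _ _)
  have hMρ : M < ρ := by rw [hρdef]; linarith
  have hρ1 : ρ < 1 := by rw [hρdef]; linarith
  have hρ0 : 0 < ρ := by rw [hρdef]; linarith
  have hqρ : q < ρ := lt_of_le_of_lt (le_max_left _ _) hMρ
  have hηρ : η ≤ ρ := le_of_lt (lt_of_le_of_lt (le_max_right _ _) hMρ)
  have Egeom := geom_rec_bound E q (2*C₂/k) η ρ hq0 (by positivity) (le_of_lt hη0)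
    hqρ hηρ hE0 Erec
  set K : ℝ := E 0 + (2*C₂/k)/(ρ - q) with hK
  intro i r
  have hcauchy : CauchySeq (fun n : ℕ => g i (r + n * a)) := by
    apply cauchySeq_of_le_geometric (ρ^a) (K * ρ^r)
    · exact pow_lt_one₀ (le_of_lt hρ0) hρ1 (by omega)
    · intro n
      rw [Real.dist_eq]
      have harg : r + (n+1) * a = (r + n * a) + a := by ring
      rw [harg]
      have h3 : |g i (r + n*a) - g i ((r + n*a) + a)| = |g i ((r+n*a)+a) - g i (r+n*a)| :=
        abs_sub_comm _ _
      rw [h3]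
      refine le_trans (hE_ge i (r+n*a)) (le_trans (Egeom (r+n*a)) ?_)
      rw [pow_add, ← mul_assoc]
      rw [mul_comm n a, pow_mul]
      try apply le_of_eq
      try ring
  obtain ⟨ℓ, hℓ⟩ := cauchySeq_tendsto_of_complete hcauchy
  exact ⟨ℓ, by simpa [hgdef] using hℓ⟩

include hk in
lemma digits_pow_reverse (M : ℕ) :
    (Nat.digits k (k ^ M)).reverse = 1 :: List.replicate M 0 := by
  have h1 : Nat.ofDigits k (List.replicate M 0 ++ [1]) = k ^ M := by
    rw [ofDigits_eq_wordVal]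
    rw [List.reverse_append, List.reverse_replicate]
    simp only [List.reverse_cons, List.reverse_nil, List.nil_append, List.singleton_append]
    rw [wordVal_cons, wordVal_zeros, List.length_replicate]
    ring
  have h2 : Nat.digits k (k ^ M) = List.replicate M 0 ++ [1] := by
    rw [← h1]
    apply Nat.digits_ofDigits k (by omega)
    · intro x hx
      rcases List.mem_append.mp hx with h | h
      · rw [List.eq_of_mem_replicate h]; omega
      · simp at h; omega
    · intro h
      simp
  rw [h2, List.reverse_append, List.reverse_replicate]
  simp

include hk hδ in
lemma perron_translate (a : ℕ) (ha : 1 ≤ a) (β C₀ : ℝ) (c : Fin d → ℕ → ℚ)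
    (hperron : ∀ i : Fin d, ∀ j < a, ∀ n : ℕ,
      |(sWord k (f i) ((Nat.digits k (k ^ (a * n + j))).reverse) : ℝ) -
          (c i j : ℝ) * (k : ℝ) ^ (a * n + j)| ≤ C₀ * β ^ (a * n)) :
    ∀ (i : Fin d) (m : ℕ),
      |((Fsum k f (δ i 0) m : ℚ) : ℝ) - (c i (m % a) : ℝ) * (k:ℝ)^m| ≤ C₀ * β^(m - m % a) := by
  intro i m
  have hmod : m % a < a := Nat.mod_lt _ (by omega)
  have hdm := Nat.div_add_mod m a
  have h := hperron i (m % a) hmod (m / a)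
  rw [hdm] at h
  have harg : a * (m / a) = m - m % a := by omega
  rw [harg] at h
  rw [digits_pow_reverse hk] at h
  rw [sWord_digit_zeros hk f δ hδ i 1 (by omega)] at h
  rw [Finset.sum_range_one] at h
  exact h

include hk hδ in
lemma reg_prefix (a : ℕ)
    (hFlim : ∀ (i : Fin d) (r : ℕ), ∃ ℓ : ℝ, Tendsto
      (fun n : ℕ => ((Fsum k f i (r + n * a) : ℚ) : ℝ) / (k:ℝ)^(r + n * a)) atTop (nhds ℓ)) :
    ∀ (p : List ℕ), (∀ y ∈ p, y < k) → ∀ (i : Fin d) (r : ℕ), ∃ ℓ : ℝ, Tendsto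
      (fun n : ℕ => ((sWord k (f i) (p ++ List.replicate (r + n * a) 0) : ℚ) : ℝ) /
        (k:ℝ)^(r + n * a)) atTop (nhds ℓ) := by
  intro p
  induction p with
  | nil =>
      intro _ i r
      refine ⟨0, ?_⟩
      have : ∀ n : ℕ, ((sWord k (f i) ([] ++ List.replicate (r + n * a) 0) : ℚ) : ℝ) /
          (k:ℝ)^(r + n * a) = 0 := by
        intro n
        have hz : sWord k (f i) (List.replicate (r + n * a) 0) = 0 := by
          rw [sWord, Finset.filter_false_of_mem, Finset.sum_empty]
          intro v _
          simp [wordVal_zeros]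
        simp [hz]
      exact Tendsto.congr (fun n => (this n).symm) tendsto_const_nhds
  | cons x p' ih =>
      intro hp i r
      have hx : x < k := hp x (by simp)
      have hp' : ∀ y ∈ p', y < k := fun y hy => hp y (by simp [hy])
      have hk0 : (0:ℝ) < (k:ℝ) := by positivity
      set ℓF : ℕ → ℝ := fun y => (hFlim (δ i y) (p'.length + r)).choose with hℓFdef
      have hℓF : ∀ y : ℕ, Tendsto
          (fun n : ℕ => ((Fsum k f (δ i y) ((p'.length + r) + n * a) : ℚ) : ℝ) /
            (k:ℝ)^((p'.length + r) + n * a)) atTop (nhds (ℓF y)) :=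
        fun y => (hFlim (δ i y) (p'.length + r)).choose_spec
      obtain ⟨ℓ', hℓ'⟩ := ih hp' (δ i x) r
      refine ⟨(∑ y ∈ Finset.range x, (k:ℝ)^p'.length * ℓF y) + ℓ', ?_⟩
      have heq : ∀ n : ℕ,
          ((sWord k (f i) ((x :: p') ++ List.replicate (r + n * a) 0) : ℚ) : ℝ) /
            (k:ℝ)^(r + n * a)
          = (∑ y ∈ Finset.range x, (k:ℝ)^p'.length *
              (((Fsum k f (δ i y) ((p'.length + r) + n * a) : ℚ) : ℝ) /
                (k:ℝ)^((p'.length + r) + n * a)))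
            + ((sWord k (f (δ i x)) (p' ++ List.replicate (r + n * a) 0) : ℚ) : ℝ) /
                (k:ℝ)^(r + n * a) := by
        intro n
        set L := r + n * a with hL
        have htv : ∀ y ∈ p' ++ List.replicate L (0:ℕ), y < k := by
          intro y hy
          rcases List.mem_append.mp hy with h | h
          · exact hp' y h
          · rw [List.eq_of_mem_replicate h]; omega
        have hlen : (p' ++ List.replicate L (0:ℕ)).length = p'.length + L := by simp
        rw [List.cons_append, sWord_cons_peel hk f δ hδ i x hx _ htv, hlen]
        rw [sWord_digit_zeros hk f δ hδ i x hx]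
        push_cast
        rw [add_div]
        congr 1
        rw [Finset.sum_div]
        apply Finset.sum_congr rfl
        intro y _
        have harg : p'.length + L = (p'.length + r) + n * a := by omega
        rw [harg]
        rw [show (k:ℝ)^((p'.length + r) + n * a) = (k:ℝ)^p'.length * (k:ℝ)^(r + n * a) by
          rw [← pow_add]; congr 1; omega]
        field_simp
        rw [← hL]
      apply Tendsto.congr (fun n => (heq n).symm)
      exact Tendsto.add
        (tendsto_finset_sum _ (fun y _ => (hℓF y).const_mul ((k:ℝ)^p'.length))) hℓ'

end Analytic

/-! ### Filter helpers -/

lemma mem_wordFilter_of_length (k a j N : ℕ) :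
    {w : List ℕ | N ≤ w.length} ∈ wordFilter k a j := by
  apply Filter.mem_inf_of_left
  exact Filter.preimage_mem_comap (Filter.mem_atTop N)

lemma mem_wordFilter_principal (k a j : ℕ) :
    {w : List ℕ | (∀ x ∈ w, x < k) ∧ w.length % a = j} ∈ wordFilter k a j :=
  Filter.mem_inf_of_right (Filter.mem_principal_self _)

lemma wordFilter_neBot (k a j : ℕ) (hk : 2 ≤ k) (ha : 0 < a) (hj : j < a) : (wordFilter k a j).NeBot := by
  rw [← Filter.forall_mem_nonempty_iff_neBot]
  intro S hS
  rw [wordFilter, Filter.mem_inf_iff] at hS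
  obtain ⟨t₁, ht₁, t₂, ht₂, rfl⟩ := hS
  rw [Filter.mem_comap] at ht₁
  obtain ⟨u, hu, hsub⟩ := ht₁
  rw [Filter.mem_atTop_sets] at hu
  obtain ⟨N, hN⟩ := hu
  rw [Filter.mem_principal] at ht₂
  refine ⟨List.replicate (j + a * (N + 1)) 0, ?_, ?_⟩
  · apply hsub
    simp only [Set.mem_preimage, List.length_replicate]
    apply hN
    nlinarith
  · apply ht₂
    constructor
    · intro x hx; rw [List.eq_of_mem_replicate hx]; omega
    · rw [List.length_replicate, Nat.add_mul_mod_self_left, Nat.mod_eq_of_lt hj]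

set_option maxHeartbeats 1000000 in
lemma wordVal_pos (k : ℕ) (hk : 2 ≤ k) (U : List ℕ) (hne : U ≠ []) (hlead : U.head? ≠ some 0) :
    1 ≤ wordVal k U := by
  cases U with
  | nil => exact absurd rfl hne
  | cons x t =>
      have hx : x ≠ 0 := fun h => hlead (by simp [h])
      rw [wordVal_cons]
      have h1 : 0 < k ^ t.length := Nat.pow_pos (by omega)
      have h2 : 0 < x * k ^ t.length := Nat.mul_pos (by omega) h1
      omega

lemma head?_append_left (U X : List ℕ) (h : U ≠ []) : (U ++ X).head? = U.head? := by
  cases U with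
  | nil => exact absurd rfl h
  | cons y t => simp

set_option maxHeartbeats 2000000 in
theorem gamma_pump_once
    (k d a : ℕ) (hk : 2 ≤ k) (hd : 0 < d) (ha : 1 ≤ a)
    (f : Fin d → List ℕ → ℚ) (δ : Fin d → ℕ → Fin d)
    (hnn : ∀ i w, 0 ≤ f i w)
    (hzero : ∀ w, f ⟨0, hd⟩ (0 :: w) = f ⟨0, hd⟩ w)
    (hδ : ∀ i : Fin d, ∀ x < k, ∀ w, f i (x :: w) = f (δ i x) w)
    (s : ℕ → ℚ) (hs : ∀ n, s n = sWord k (f ⟨0, hd⟩) ((Nat.digits k n).reverse))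
    (γ : ℝ) (hγdef : γ = Filter.atTop.limsup (fun n : ℕ => (s n : ℝ) / n)) (hγ : 0 < γ)
    (hperron : ∃ (β C₀ : ℝ), 0 < β ∧ β < (k : ℝ) ∧ 0 < C₀ ∧ ∃ c : Fin d → ℕ → ℚ,
      ∀ i : Fin d, ∀ j < a, ∀ n : ℕ,
        |(sWord k (f i) ((Nat.digits k (k ^ (a * n + j))).reverse) : ℝ) -
            (c i j : ℝ) * (k : ℝ) ^ (a * n + j)| ≤ C₀ * β ^ (a * n))
    (j : ℕ) (hj : j < a)
    (A B C : List ℕ)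
    (hAne : A ≠ []) (hBne : B ≠ []) (hCne : C ≠ [])
    (hAdig : ∀ x ∈ A, x < k) (hBdig : ∀ x ∈ B, x < k) (hCdig : ∀ x ∈ C, x < k)
    (hAlen : a ∣ A.length) (hBlen : a ∣ B.length) (hClen : a ∣ C.length)
    (hAlead : A.head? ≠ some 0)
    (hδA : A.foldl δ ⟨0, hd⟩ = (A ++ B).foldl δ ⟨0, hd⟩)
    (hδAB : (A ++ B).foldl δ ⟨0, hd⟩ = (A ++ B ++ C).foldl δ ⟨0, hd⟩)
    (hgam : gammaJ k a j s (A ++ B ++ C) = γ) :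
    gammaJ k a j s (A ++ B ++ B ++ C) = γ := by
  classical
  obtain ⟨β, C₀, hβ0, hβk, hC₀, c, hperr⟩ := hperron
  set one : Fin d := ⟨0, hd⟩ with hone
  have hk1 : 1 < k := by omega
  have ha0 : 0 < a := ha
  haveI hneB : (wordFilter k a j).NeBot := wordFilter_neBot k a j hk ha0 hj
  -- digit validity
  have happ : ∀ {u v : List ℕ}, (∀ x ∈ u, x < k) → (∀ x ∈ v, x < k) →
      (∀ x ∈ u ++ v, x < k) := by
    intro u v hu hv x hx
    rcases List.mem_append.mp hx with h | h
    exacts [hu x h, hv x h]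
  have hABdig : ∀ x ∈ A ++ B, x < k := happ hAdig hBdig
  have hABCdig : ∀ x ∈ A ++ B ++ C, x < k := happ hABdig hCdig
  have hACdig : ∀ x ∈ A ++ C, x < k := happ hAdig hCdig
  have hABBCdig : ∀ x ∈ A ++ B ++ B ++ C, x < k := happ (happ hABdig hBdig) hCdig
  -- nonempty and leading digits
  have hABne : A ++ B ≠ [] := fun h => hAne (List.append_eq_nil_iff.mp h).1
  have hABCne : A ++ B ++ C ≠ [] := fun h => hABne (List.append_eq_nil_iff.mp h).1
  have hABBCne : A ++ B ++ B ++ C ≠ [] := fun h =>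
    hABne (List.append_eq_nil_iff.mp (List.append_eq_nil_iff.mp h).1).1
  have hACne : A ++ C ≠ [] := fun h => hAne (List.append_eq_nil_iff.mp h).1
  have hABlead : (A ++ B).head? ≠ some 0 := by rw [head?_append_left A B hAne]; exact hAlead
  have hABClead : (A ++ B ++ C).head? ≠ some 0 := by
    rw [head?_append_left _ C hABne, head?_append_left A B hAne]; exact hAlead
  have hABBClead : (A ++ B ++ B ++ C).head? ≠ some 0 := by
    rw [head?_append_left _ C (fun h => hABne (List.append_eq_nil_iff.mp h).1),
      head?_append_left _ B hABne, head?_append_left A B hAne]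
    exact hAlead
  have hAClead : (A ++ C).head? ≠ some 0 := by rw [head?_append_left A C hAne]; exact hAlead
  -- s is nonnegative
  have hsnn : ∀ n, 0 ≤ s n := by
    intro n
    rw [hs]
    exact Finset.sum_nonneg fun v _ => hnn _ v
  -- the basic splitting identity for numbers with a fixed prefix
  have hsNum : ∀ (U t : List ℕ), U ≠ [] → (∀ x ∈ U, x < k) → U.head? ≠ some 0 →
      (∀ x ∈ t, x < k) →
      s (wordVal k (U ++ t)) = sWord k (f one) (U ++ List.replicate t.length 0)
        + sWord k (f (U.foldl δ one)) t := by
    intro U t hU1 hU2 hU3 ht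
    have hUt : U ++ t ≠ [] := fun h => hU1 (List.append_eq_nil_iff.mp h).1
    rw [hs, digits_reverse_eq k hk (U ++ t) hUt (happ hU2 ht)
      (by rw [head?_append_left U t hU1]; exact hU3)]
    exact sWord_peel hk f δ hδ U one t hU2 ht
  -- values of prefixes
  have hvalA : 1 ≤ wordVal k A := wordVal_pos k hk A hAne hAlead
  have hABval : wordVal k (A ++ B) = wordVal k A * k ^ B.length + wordVal k B :=
    wordVal_append k A B
  have hDle : wordVal k A + 1 ≤ wordVal k (A ++ B) := by
    have h1 : 0 < B.length := List.length_pos_iff.mpr hBne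
    have h2 : k ≤ k ^ B.length := by
      calc k = k ^ 1 := (pow_one k).symm
        _ ≤ k ^ B.length := Nat.pow_le_pow_right (by omega) h1
    have h3 : wordVal k A * 2 ≤ wordVal k A * k ^ B.length :=
      Nat.mul_le_mul_left _ (by omega)
    omega
  set D : ℕ := wordVal k (A ++ B) - wordVal k A with hDdef
  have hD1 : 1 ≤ D := by omega
  have hDadd : wordVal k A + D = wordVal k (A ++ B) := by omega
  have keyV : ∀ t : List ℕ,
      wordVal k ((A ++ B) ++ t) = wordVal k (A ++ t) + D * k ^ t.length := by
    intro t
    rw [wordVal_append k (A ++ B) t, wordVal_append k A t, ← hDadd]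
    ring
  set uQ : ℕ → ℚ := fun L => sWord k (f one) ((A ++ B) ++ List.replicate L 0)
      - sWord k (f one) (A ++ List.replicate L 0) with huQdef
  have keyS : ∀ t : List ℕ, (∀ x ∈ t, x < k) →
      s (wordVal k ((A ++ B) ++ t)) = s (wordVal k (A ++ t)) + uQ t.length := by
    intro t ht
    rw [hsNum (A ++ B) t hABne hABdig hABlead ht, hsNum A t hAne hAdig hAlead ht, ← hδA]
    simp only [huQdef]
    ring
  -- analytic limits
  have hP := perron_translate hk f δ hδ a ha β C₀ c hperr
  have hFlim := Flim hk hd f δ hδ a ha β C₀ hβ0 hβk hC₀ c hP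
  set r0 : ℕ := (C.length + j) % a with hr0def
  have hr0a : r0 < a := Nat.mod_lt _ ha0
  obtain ⟨ℓ₁, hℓ₁⟩ := reg_prefix hk f δ hδ a hFlim (A ++ B) hABdig one r0
  obtain ⟨ℓ₂, hℓ₂⟩ := reg_prefix hk f δ hδ a hFlim A hAdig one r0
  set uInf : ℝ := ℓ₁ - ℓ₂ with huInfdef
  have huLim : Tendsto (fun n : ℕ => ((uQ (r0 + n * a) : ℚ) : ℝ) / (k:ℝ)^(r0 + n * a))
      atTop (nhds uInf) := by
    apply Tendsto.congr _ (hℓ₁.sub hℓ₂)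
    intro n
    simp only [huQdef]
    push_cast
    rw [sub_div]
  have hu_close : ∀ ε : ℝ, 0 < ε → ∃ N : ℕ, ∀ L : ℕ, L % a = r0 → r0 + a * N ≤ L →
      |((uQ L : ℚ) : ℝ) / (k:ℝ)^L - uInf| ≤ ε := by
    intro ε hε
    obtain ⟨N, hN⟩ := Metric.tendsto_atTop.mp huLim ε hε
    refine ⟨N, fun L hL1 hL2 => ?_⟩
    obtain ⟨n, hnN, hLeq⟩ := exists_prog a r0 L N ha0
      (by rw [hL1, Nat.mod_eq_of_lt hr0a]) hL2
    rw [Nat.mod_eq_of_lt hr0a] at hLeq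
    have h := hN n hnN
    rw [Real.dist_eq] at h
    rw [hLeq]
    exact le_of_lt h
  -- boundedness of s n / n and eventual upper bounds
  have hbdd : IsBoundedUnder (· ≤ ·) atTop (fun n : ℕ => (s n : ℝ) / n) := by
    by_contra hb
    have hempty : {b : ℝ | ∀ᶠ n : ℕ in atTop, (s n : ℝ) / n ≤ b} = ∅ := by
      rw [Set.eq_empty_iff_forall_notMem]
      intro b hbmem
      exact hb ⟨b, Filter.eventually_map.mpr hbmem⟩
    have : γ = 0 := by
      rw [hγdef, Filter.limsup_eq, hempty, Real.sInf_empty]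
    linarith
  have hev_le : ∀ ε : ℝ, 0 < ε → ∀ᶠ n : ℕ in atTop, (s n : ℝ) / n ≤ γ + ε := by
    intro ε hε
    have h := Filter.eventually_lt_of_limsup_lt (b := γ + ε)
      (by rw [← hγdef]; linarith) hbdd
    exact h.mono fun n hn => le_of_lt hn
  -- eventual upper bound for ratios with a fixed prefix
  have hev_ratio : ∀ (U : List ℕ), U ≠ [] → (∀ x ∈ U, x < k) → U.head? ≠ some 0 →
      ∀ ε : ℝ, 0 < ε → ∀ᶠ w in wordFilter k a j,
        (s (wordVal k (U ++ w)) : ℝ) / (wordVal k (U ++ w)) ≤ γ + ε := by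
    intro U hU1 hU2 hU3 ε hε
    obtain ⟨N₀, hN₀⟩ := Filter.eventually_atTop.mp (hev_le ε hε)
    have h1 : ∀ᶠ w in wordFilter k a j, N₀ ≤ w.length :=
      mem_wordFilter_of_length k a j N₀
    filter_upwards [h1] with w hw
    apply hN₀
    have hU4 : 1 ≤ wordVal k U := wordVal_pos k hk U hU1 hU3
    have h5 : wordVal k (U ++ w) = wordVal k U * k ^ w.length + wordVal k w :=
      wordVal_append k U w
    have h6 : w.length < k ^ w.length := Nat.lt_pow_self hk1
    have h7 : k ^ w.length ≤ wordVal k U * k ^ w.length :=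
      Nat.le_mul_of_pos_left _ (by omega)
    omega
  have hratio_nonneg : ∀ (U : List ℕ) (w : List ℕ),
      0 ≤ (s (wordVal k (U ++ w)) : ℝ) / (wordVal k (U ++ w)) := by
    intro U w
    apply div_nonneg _ (by positivity)
    exact_mod_cast hsnn _
  have hgamma_le : ∀ (U : List ℕ), U ≠ [] → (∀ x ∈ U, x < k) → U.head? ≠ some 0 →
      gammaJ k a j s U ≤ γ := by
    intro U h1 h2 h3
    have hcob : IsCoboundedUnder (· ≤ ·) (wordFilter k a j)
        (fun w => (s (wordVal k (U ++ w)) : ℝ) / (wordVal k (U ++ w))) :=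
      Filter.IsCoboundedUnder.of_frequently_ge
        (Filter.Eventually.frequently (Filter.Eventually.of_forall fun w => hratio_nonneg U w))
    have key : ∀ ε : ℝ, 0 < ε → gammaJ k a j s U ≤ γ + ε := by
      intro ε hε
      exact Filter.limsup_le_of_le hcob (hev_ratio U h1 h2 h3 ε hε)
    by_contra hlt
    push_neg at hlt
    have := key ((gammaJ k a j s U - γ)/2) (by linarith)
    linarith
  -- frequently near γ for the ABC prefix
  have hfreq : ∀ ε : ℝ, 0 < ε → ∃ᶠ w in wordFilter k a j,
      γ - ε < (s (wordVal k ((A ++ B ++ C) ++ w)) : ℝ) / (wordVal k ((A ++ B ++ C) ++ w)) := by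
    intro ε hε
    have hcob : IsCoboundedUnder (· ≤ ·) (wordFilter k a j)
        (fun w => (s (wordVal k ((A ++ B ++ C) ++ w)) : ℝ) /
          (wordVal k ((A ++ B ++ C) ++ w))) :=
      Filter.IsCoboundedUnder.of_frequently_ge
        (Filter.Eventually.frequently (Filter.Eventually.of_forall fun w =>
          hratio_nonneg (A ++ B ++ C) w))
    have hlt : γ - ε < Filter.limsup
        (fun w => (s (wordVal k ((A ++ B ++ C) ++ w)) : ℝ) /
          (wordVal k ((A ++ B ++ C) ++ w))) (wordFilter k a j) := by
      have hg : Filter.limsup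
          (fun w => (s (wordVal k ((A ++ B ++ C) ++ w)) : ℝ) /
            (wordVal k ((A ++ B ++ C) ++ w))) (wordFilter k a j) = γ := hgam
      rw [hg]
      linarith
    exact Filter.frequently_lt_of_lt_limsup hcob hlt
  -- congruence helper for residues
  have hCw_mod : ∀ m : ℕ, m % a = j → (C.length + m) % a = r0 := by
    intro m hm
    rw [hr0def, Nat.add_mod, hm, Nat.add_mod C.length j, Nat.mod_eq_of_lt hj]
  -- the limit of u is at least γ * D
  set Y : ℝ := (wordVal k (A ++ C) : ℝ) + 1 with hYdef
  have hY0 : 0 < Y := by positivity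
  have hD0R : (1:ℝ) ≤ (D:ℝ) := by exact_mod_cast hD1
  have huInf_ge : γ * D ≤ uInf := by
    apply le_of_forall_pos_le_add
    intro ε' hε'
    have hCd0 : (0:ℝ) < (D:ℝ) + 2*Y + 1 := by linarith
    set ε : ℝ := ε' / ((D:ℝ) + 2*Y + 1) with hεdef
    have hε : 0 < ε := div_pos hε' hCd0
    obtain ⟨N, hN⟩ := hu_close ε hε
    have hev1 := hev_ratio (A ++ C) hACne hACdig hAClead ε hε
    have hev2 : ∀ᶠ w in wordFilter k a j, r0 + a * N ≤ w.length :=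
      mem_wordFilter_of_length k a j (r0 + a * N)
    have hev3 : ∀ᶠ w in wordFilter k a j, (∀ x ∈ w, x < k) ∧ w.length % a = j :=
      mem_wordFilter_principal k a j
    obtain ⟨w, hw1, hw2, hw3, hwdig, hwmod⟩ :=
      ((hfreq ε hε).and_eventually (hev1.and (hev2.and hev3))).exists
    have htv : ∀ x ∈ C ++ w, x < k := happ hCdig hwdig
    set L : ℕ := (C ++ w).length with hLdef
    have hLval : L = C.length + w.length := by simp [hLdef]
    have hLmod : L % a = r0 := by rw [hLval]; exact hCw_mod _ hwmod
    have hLge : r0 + a * N ≤ L := by omega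
    have hu := hN L hLmod hLge
    have hSeq := keyS (C ++ w) htv
    have hVeq := keyV (C ++ w)
    rw [← hLdef] at hSeq hVeq
    have e1 : (A ++ B) ++ (C ++ w) = (A ++ B ++ C) ++ w := by simp [List.append_assoc]
    have e2 : A ++ (C ++ w) = (A ++ C) ++ w := by simp
    rw [e1, e2] at hSeq hVeq
    set kL : ℝ := (k:ℝ)^L with hkLdef
    have hkL0 : (0:ℝ) < kL := by positivity
    set x : ℝ := (s (wordVal k ((A ++ C) ++ w)) : ℝ) with hxdef
    set y : ℝ := ((wordVal k ((A ++ C) ++ w) : ℕ) : ℝ) with hydef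
    have hy1 : (1:ℝ) ≤ y := by
      have hv1 : 1 ≤ wordVal k (A ++ C) := wordVal_pos k hk _ hACne hAClead
      have hv2 : wordVal k ((A ++ C) ++ w) =
          wordVal k (A ++ C) * k ^ w.length + wordVal k w := wordVal_append k _ w
      have hv3 : 0 < k ^ w.length := Nat.pow_pos (by omega)
      have hv4 : 0 < wordVal k (A ++ C) * k ^ w.length := Nat.mul_pos (by omega) hv3
      have : 1 ≤ wordVal k ((A ++ C) ++ w) := by omega
      rw [hydef]
      exact_mod_cast this
    have hx0 : (0:ℝ) ≤ x := by rw [hxdef]; exact_mod_cast hsnn _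
    have hyY : y ≤ Y * kL := by
      have h1 : wordVal k ((A ++ C) ++ w) =
          wordVal k (A ++ C) * k ^ w.length + wordVal k w := wordVal_append k _ w
      have h2 : wordVal k w < k ^ w.length := wordVal_lt k hk w hwdig
      have h3 : k ^ w.length ≤ k ^ L := Nat.pow_le_pow_right (by omega) (by omega)
      have e5 : (wordVal k (A ++ C) + 1) * k ^ w.length =
          wordVal k (A ++ C) * k ^ w.length + k ^ w.length := by ring
      have h4 : wordVal k ((A ++ C) ++ w) ≤ (wordVal k (A ++ C) + 1) * k ^ L := by
        have h5 : (wordVal k (A ++ C) + 1) * k ^ w.length ≤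
            (wordVal k (A ++ C) + 1) * k ^ L := Nat.mul_le_mul_left _ h3
        omega
      rw [hydef, hYdef, hkLdef]
      calc ((wordVal k ((A ++ C) ++ w) : ℕ) : ℝ)
          ≤ (((wordVal k (A ++ C) + 1) * k ^ L : ℕ) : ℝ) := by exact_mod_cast h4
        _ = ((wordVal k (A ++ C) : ℝ) + 1) * (k:ℝ)^L := by push_cast; ring
    have hnum : (s (wordVal k ((A ++ B ++ C) ++ w)) : ℝ) = x + ((uQ L : ℚ) : ℝ) := by
      rw [hxdef]
      exact_mod_cast congrArg (fun q : ℚ => (q : ℝ)) hSeq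
    have hden : ((wordVal k ((A ++ B ++ C) ++ w) : ℕ) : ℝ) = y + (D:ℝ) * kL := by
      rw [hydef, hkLdef, hVeq]
      push_cast
      ring
    rw [hnum, hden] at hw1
    rw [hxdef, hydef] at hw2
    have hden0 : (0:ℝ) < y + (D:ℝ) * kL := by nlinarith
    have h1 : (γ - ε) * (y + (D:ℝ) * kL) < x + ((uQ L : ℚ) : ℝ) :=
      (lt_div_iff₀ hden0).mp hw1
    have hrb : x ≤ (γ + ε) * y := (div_le_iff₀ (by linarith)).mp hw2
    have h2 : ε * y ≤ ε * (Y * kL) := mul_le_mul_of_nonneg_left hyY hε.le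
    have hu1 : ((γ - ε) * (D:ℝ) - 2*ε*Y) * kL ≤ ((uQ L : ℚ) : ℝ) := by nlinarith
    have h3 : ((uQ L : ℚ) : ℝ) / kL ≤ uInf + ε := by
      have := abs_le.mp hu
      linarith [this.2]
    have h4 : (γ - ε) * (D:ℝ) - 2*ε*Y ≤ uInf + ε := by
      have h5 : (γ - ε) * (D:ℝ) - 2*ε*Y ≤ ((uQ L : ℚ) : ℝ) / kL :=
        (le_div_iff₀ hkL0).mpr hu1
      exact le_trans h5 h3
    have hεCd : ε * ((D:ℝ) + 2*Y + 1) = ε' := by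
      rw [hεdef]
      field_simp
    nlinarith
  -- frequently, the ratio for the pumped prefix is at least γ - ε
  have hfinal : ∀ ε : ℝ, 0 < ε → ∃ᶠ w in wordFilter k a j,
      γ - ε ≤ (s (wordVal k ((A ++ B ++ B ++ C) ++ w)) : ℝ) /
        (wordVal k ((A ++ B ++ B ++ C) ++ w)) := by
    intro ε hε
    obtain ⟨N, hN⟩ := hu_close ε hε
    have hev2 : ∀ᶠ w in wordFilter k a j, r0 + a * N ≤ w.length :=
      mem_wordFilter_of_length k a j (r0 + a * N)
    have hev3 : ∀ᶠ w in wordFilter k a j, (∀ x ∈ w, x < k) ∧ w.length % a = j :=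
      mem_wordFilter_principal k a j
    apply ((hfreq ε hε).and_eventually (hev2.and hev3)).mono
    rintro w ⟨hw1, hw3, hwdig, hwmod⟩
    have htv : ∀ x ∈ B ++ (C ++ w), x < k := happ hBdig (happ hCdig hwdig)
    set L : ℕ := (B ++ (C ++ w)).length with hLdef
    have hLval : L = B.length + (C.length + w.length) := by simp [hLdef]
    have hLmod : L % a = r0 := by
      obtain ⟨b', hb'⟩ := hBlen
      rw [hLval, hb', Nat.mul_add_mod]
      exact hCw_mod _ hwmod
    have hLge : r0 + a * N ≤ L := by omega
    have hu := hN L hLmod hLge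
    have hSeq := keyS (B ++ (C ++ w)) htv
    have hVeq := keyV (B ++ (C ++ w))
    rw [← hLdef] at hSeq hVeq
    have e3 : (A ++ B) ++ (B ++ (C ++ w)) = (A ++ B ++ B ++ C) ++ w := by
      simp [List.append_assoc]
    have e4 : A ++ (B ++ (C ++ w)) = (A ++ B ++ C) ++ w := by simp
    rw [e3, e4] at hSeq hVeq
    set kL : ℝ := (k:ℝ)^L with hkLdef
    have hkL0 : (0:ℝ) < kL := by positivity
    have hV0 : 1 ≤ wordVal k ((A ++ B ++ C) ++ w) := by
      have hv1 : 1 ≤ wordVal k (A ++ B ++ C) := wordVal_pos k hk _ hABCne hABClead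
      have hv2 : wordVal k ((A ++ B ++ C) ++ w) =
          wordVal k (A ++ B ++ C) * k ^ w.length + wordVal k w := wordVal_append k _ w
      have hv3 : 0 < k ^ w.length := Nat.pow_pos (by omega)
      have hv4 : 0 < wordVal k (A ++ B ++ C) * k ^ w.length := Nat.mul_pos (by omega) hv3
      omega
    have hV0R : (1:ℝ) ≤ ((wordVal k ((A ++ B ++ C) ++ w) : ℕ) : ℝ) := by exact_mod_cast hV0
    have hX : (γ - ε) * ((wordVal k ((A ++ B ++ C) ++ w) : ℕ) : ℝ) ≤
        (s (wordVal k ((A ++ B ++ C) ++ w)) : ℝ) :=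
      le_of_lt ((lt_div_iff₀ (by linarith)).mp hw1)
    have huL : (γ * (D:ℝ) - ε) * kL ≤ ((uQ L : ℚ) : ℝ) := by
      have h5 : uInf - ε ≤ ((uQ L : ℚ) : ℝ) / kL := by
        have := abs_le.mp hu
        linarith [this.1]
      have h6 : γ * (D:ℝ) - ε ≤ ((uQ L : ℚ) : ℝ) / kL := by linarith [huInf_ge]
      exact (le_div_iff₀ hkL0).mp h6
    have hnum : (s (wordVal k ((A ++ B ++ B ++ C) ++ w)) : ℝ) =
        (s (wordVal k ((A ++ B ++ C) ++ w)) : ℝ) + ((uQ L : ℚ) : ℝ) :=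
      by exact_mod_cast congrArg (fun q : ℚ => (q : ℝ)) hSeq
    have hden : ((wordVal k ((A ++ B ++ B ++ C) ++ w) : ℕ) : ℝ) =
        ((wordVal k ((A ++ B ++ C) ++ w) : ℕ) : ℝ) + (D:ℝ) * kL := by
      rw [hkLdef, hVeq]
      push_cast
      ring
    rw [hnum, hden]
    have hden0 : (0:ℝ) < ((wordVal k ((A ++ B ++ C) ++ w) : ℕ) : ℝ) + (D:ℝ) * kL := by
      nlinarith
    rw [le_div_iff₀ hden0]
    have h7 : (0:ℝ) ≤ ε * ((D:ℝ) - 1) * kL := by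
      apply mul_nonneg (mul_nonneg hε.le (by linarith)) hkL0.le
    nlinarith
  -- conclusion
  have hub : gammaJ k a j s (A ++ B ++ B ++ C) ≤ γ :=
    hgamma_le _ hABBCne hABBCdig hABBClead
  have hlb : γ ≤ gammaJ k a j s (A ++ B ++ B ++ C) := by
    apply le_of_forall_pos_le_add
    intro ε hε
    have hbd : IsBoundedUnder (· ≤ ·) (wordFilter k a j)
        (fun w => (s (wordVal k ((A ++ B ++ B ++ C) ++ w)) : ℝ) /
          (wordVal k ((A ++ B ++ B ++ C) ++ w))) :=
      ⟨γ + 1, Filter.eventually_map.mpr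
        (hev_ratio _ hABBCne hABBCdig hABBClead 1 one_pos)⟩
    have hfl := hfinal ε hε
    have hle : γ - ε ≤ gammaJ k a j s (A ++ B ++ B ++ C) :=
      Filter.le_limsup_of_frequently_le hfl hbd
    linarith
  linarith
end

section
/- Let k ≥ 2 be a natural number and let S ⊆ ℕ be a k-automatic set. If liminf_{N→∞} π_S(N)/N = 0, then limsup_{N→∞} π_S(N)/N = 0. -/
open Filter

variable {σ : Type}

/-- MSB-first run of an automaton on the `t`-digit base-`k` representation of `n`. -/
def runA (k : ℕ) (δ : σ → ℕ → σ) : ℕ → σ → ℕ → σ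
  | 0, q, _ => q
  | t+1, q, n => runA k δ t (δ q (n / k^t)) (n % k^t)

/-- Number of words of length `ℓ` over digits `< k` leading from `q` to an accepting state. -/
def cntA (k : ℕ) (δ : σ → ℕ → σ) (acc : σ → Bool) : ℕ → σ → ℕ
  | 0, q => if acc q then 1 else 0
  | ℓ+1, q => ∑ d ∈ Finset.range k, cntA k δ acc ℓ (δ q d)

lemma sum_range_mul (f : ℕ → ℕ) (a b : ℕ) :
    ∑ n ∈ Finset.range (a*b), f n = ∑ i ∈ Finset.range a, ∑ j ∈ Finset.range b, f (i*b+j) := by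
  induction a with
  | zero => simp
  | succ a ih =>
    have h1 : (a+1)*b = a*b + b := by ring
    rw [h1, Finset.range_eq_Ico,
      ← Finset.sum_Ico_consecutive f (Nat.zero_le (a*b)) (Nat.le_add_right _ b),
      Finset.sum_Ico_eq_sum_range]
    simp only [Finset.sum_Ico_eq_sum_range, Nat.add_sub_cancel_left, Nat.sub_zero, Nat.zero_add,
      ← Finset.range_eq_Ico]
    rw [ih, Finset.sum_range_succ]

lemma runA_append (k : ℕ) (δ : σ → ℕ → σ) (hk : 0 < k) :
    ∀ (t : ℕ) (q : σ) (n d : ℕ), n < k^t → d < k →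
      runA k δ (t+1) q (n*k + d) = δ (runA k δ t q n) d := by
  intro t
  induction t with
  | zero =>
    intro q n d hn hd
    have hn0 : n = 0 := by simpa using hn
    subst hn0
    simp [runA, Nat.div_eq_of_lt hd, Nat.mod_one]
  | succ t ih =>
    intro q n d hn hd
    have hrd : (n % k^t) * k + d < k^(t+1) := by
      have h1 : n % k^t < k^t := Nat.mod_lt _ (Nat.pow_pos (n := t) hk)
      have : (n % k^t + 1) * k ≤ k^t * k := Nat.mul_le_mul_right k h1
      calc (n % k^t) * k + d < (n % k^t + 1) * k := by nlinarith
        _ ≤ k^(t+1) := by rw [pow_succ]; exact this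
    have hsplit : n*k + d = k^(t+1) * (n / k^t) + ((n % k^t) * k + d) := by
      have hn' := Nat.div_add_mod n (k^t)
      rw [pow_succ]
      nlinarith [hn']
    have hdiv : (n*k + d) / k^(t+1) = n / k^t := by
      rw [hsplit, Nat.mul_add_div (Nat.pow_pos hk), Nat.div_eq_of_lt hrd, add_zero]
    have hmod : (n*k + d) % k^(t+1) = (n % k^t) * k + d := by
      rw [hsplit, Nat.mul_add_mod, Nat.mod_eq_of_lt hrd]
    show runA k δ (t+1) (δ q ((n*k+d) / k^(t+1))) ((n*k+d) % k^(t+1)) = _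
    rw [hdiv, hmod, ih (δ q (n / k^t)) (n % k^t) d (Nat.mod_lt _ (Nat.pow_pos (n := t) hk)) hd]
    rfl

lemma cntA_card (k : ℕ) (δ : σ → ℕ → σ) (acc : σ → Bool) (hk : 0 < k) :
    ∀ (ℓ : ℕ) (q : σ),
      cntA k δ acc ℓ q
        = ((Finset.range (k^ℓ)).filter (fun n => acc (runA k δ ℓ q n))).card := by
  intro ℓ
  induction ℓ with
  | zero =>
    intro q
    simp only [cntA, runA, pow_zero, Finset.range_one]
    by_cases h : acc q <;> simp [h]
  | succ ℓ ih =>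
    intro q
    have hpow : k^(ℓ+1) = k * k^ℓ := by rw [pow_succ, mul_comm]
    rw [Finset.card_filter, hpow, sum_range_mul]
    show cntA k δ acc (ℓ+1) q = _
    rw [cntA]
    refine Finset.sum_congr rfl fun d hd => ?_
    rw [ih, Finset.card_filter]
    refine Finset.sum_congr rfl fun r hr => ?_
    have hd' : d < k := Finset.mem_range.1 hd
    have hr' : r < k^ℓ := Finset.mem_range.1 hr
    have hkl : 0 < k^ℓ := Nat.pow_pos hk
    have hdiv : (d * k^ℓ + r) / k^ℓ = d := by
      rw [Nat.mul_comm, Nat.mul_add_div hkl, Nat.div_eq_of_lt hr', add_zero]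
    have hmod : (d * k^ℓ + r) % k^ℓ = r := by
      rw [Nat.mul_comm, Nat.mul_add_mod, Nat.mod_eq_of_lt hr']
    show _ = (if acc (runA k δ (ℓ+1) q (d * k^ℓ + r)) = true then 1 else 0)
    have : runA k δ (ℓ+1) q (d * k^ℓ + r) = runA k δ ℓ (δ q d) r := by
      show runA k δ ℓ (δ q ((d * k^ℓ + r) / k^ℓ)) ((d * k^ℓ + r) % k^ℓ) = _
      rw [hdiv, hmod]
    rw [this]


lemma cntA_reach_le (k : ℕ) (δ : σ → ℕ → σ) (acc : σ → Bool) (hk : 0 < k) :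
    ∀ (t : ℕ) (q : σ) (ℓ n : ℕ), n < k^t →
      cntA k δ acc ℓ (runA k δ t q n) ≤ cntA k δ acc (t+ℓ) q := by
  intro t
  induction t with
  | zero =>
    intro q ℓ n hn
    have hn0 : n = 0 := by simpa using hn
    subst hn0
    simp [runA]
  | succ t ih =>
    intro q ℓ n hn
    have hd : n / k^t < k := by
      apply Nat.div_lt_of_lt_mul
      calc n < k^(t+1) := hn
        _ = k^t * k := pow_succ k t
    have hstep : runA k δ (t+1) q n = runA k δ t (δ q (n / k^t)) (n % k^t) := rfl
    rw [hstep]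
    have h1 : cntA k δ acc ℓ (runA k δ t (δ q (n / k^t)) (n % k^t))
        ≤ cntA k δ acc (t+ℓ) (δ q (n / k^t)) :=
      ih _ ℓ _ (Nat.mod_lt _ (Nat.pow_pos (n := t) hk))
    refine h1.trans ?_
    have he : t+1+ℓ = (t+ℓ)+1 := by omega
    rw [he]
    show _ ≤ ∑ d ∈ Finset.range k, cntA k δ acc (t+ℓ) (δ q d)
    exact Finset.single_le_sum (f := fun d => cntA k δ acc (t+ℓ) (δ q d))
      (fun d _ => Nat.zero_le _) (Finset.mem_range.2 hd)

lemma cntA_sum_le (k : ℕ) (δ : σ → ℕ → σ) (acc : σ → Bool) :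
    ∀ (t : ℕ) (q : σ) (ℓ : ℕ) (B : ℝ),
      (∀ n, n < k^t → (cntA k δ acc ℓ (runA k δ t q n) : ℝ) ≤ B) →
      (cntA k δ acc (t+ℓ) q : ℝ) ≤ (k:ℝ)^t * B := by
  intro t
  induction t with
  | zero =>
    intro q ℓ B hB
    simpa [runA] using hB 0 (by simp)
  | succ t ih =>
    intro q ℓ B hB
    have he : t+1+ℓ = (t+ℓ)+1 := by omega
    rw [he]
    show ((∑ d ∈ Finset.range k, cntA k δ acc (t+ℓ) (δ q d) : ℕ) : ℝ) ≤ _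
    push_cast
    have hterm : ∀ d ∈ Finset.range k, (cntA k δ acc (t+ℓ) (δ q d) : ℝ) ≤ (k:ℝ)^t * B := by
      intro d hd
      refine ih (δ q d) ℓ B fun n hn => ?_
      have hd' : d < k := Finset.mem_range.1 hd
      have hlt : d * k^t + n < k^(t+1) := by
        have h1 : d + 1 ≤ k := hd'
        have : (d+1) * k^t ≤ k * k^t := Nat.mul_le_mul_right _ h1
        calc d * k^t + n < d * k^t + k^t := by omega
          _ = (d+1) * k^t := by ring
          _ ≤ k * k^t := this
          _ = k^(t+1) := by rw [pow_succ, mul_comm]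
      have hkl : 0 < k^t := Nat.pow_pos (by omega)
      have hdiv : (d * k^t + n) / k^t = d := by
        rw [Nat.mul_comm, Nat.mul_add_div hkl, Nat.div_eq_of_lt hn, add_zero]
      have hmod : (d * k^t + n) % k^t = n := by
        rw [Nat.mul_comm, Nat.mul_add_mod, Nat.mod_eq_of_lt hn]
      have := hB (d * k^t + n) hlt
      have hrw : runA k δ (t+1) q (d * k^t + n) = runA k δ t (δ q d) n := by
        show runA k δ t (δ q ((d * k^t + n) / k^t)) ((d * k^t + n) % k^t) = _
        rw [hdiv, hmod]
      rwa [hrw] at this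
    calc (∑ d ∈ Finset.range k, (cntA k δ acc (t+ℓ) (δ q d) : ℝ))
        ≤ ∑ _d ∈ Finset.range k, (k:ℝ)^t * B := Finset.sum_le_sum hterm
      _ = (k:ℝ) * ((k:ℝ)^t * B) := by rw [Finset.sum_const, Finset.card_range]; ring
      _ = (k:ℝ)^(t+1) * B := by ring

/-- The base-`k` digits of `n`, most significant first, padded with zeros to length `ℓ`. -/
def padR (k ℓ n : ℕ) : List ℕ :=
  List.replicate (ℓ - (Nat.digits k n).length) 0 ++ (Nat.digits k n).reverse

lemma digits_len_le_of_lt_pow {k ℓ n : ℕ} (hk : 2 ≤ k) (hn : n < k^ℓ) :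
    (Nat.digits k n).length ≤ ℓ := by
  rcases Nat.eq_zero_or_pos n with rfl | hn0
  · simp
  · rw [Nat.digits_len k n (by omega) (by omega)]
    have := (Nat.log_lt_iff_lt_pow (by omega : 1 < k) (by omega : n ≠ 0)).2 hn
    omega

lemma padSplit {k : ℕ} (hk : 2 ≤ k) :
    ∀ (ℓ d r : ℕ), 0 < d → d < k → r < k^ℓ →
      Nat.digits k (r + d * k^ℓ)
        = (Nat.digits k r ++ List.replicate (ℓ - (Nat.digits k r).length) 0) ++ [d] := by
  intro ℓ
  induction ℓ with
  | zero =>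
    intro d r hd0 hdk hr
    have : r = 0 := by simpa using hr
    subst this
    simp [Nat.digits_of_lt k d (by omega) hdk]
  | succ ℓ ih =>
    intro d r hd0 hdk hr
    have hk1 : 1 < k := by omega
    have hn0 : 0 < r + d * k^(ℓ+1) := by positivity
    have hmod : (r + d * k^(ℓ+1)) % k = r % k := by
      have he : r + d * k^(ℓ+1) = r + (d * k^ℓ) * k := by ring
      rw [he, Nat.add_mul_mod_self_right]
    have hdiv : (r + d * k^(ℓ+1)) / k = r / k + d * k^ℓ := by
      have he : r + d * k^(ℓ+1) = r + (d * k^ℓ) * k := by ring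
      rw [he, Nat.add_mul_div_right _ _ (by omega : 0 < k)]
    have hrdiv : r / k < k^ℓ := by
      apply Nat.div_lt_of_lt_mul
      calc r < k^(ℓ+1) := hr
        _ = k * k^ℓ := by rw [pow_succ]; ring
    rw [Nat.digits_def' hk1 hn0, hmod, hdiv, ih d (r/k) hd0 hdk hrdiv]
    rcases Nat.eq_zero_or_pos r with rfl | hr0
    · simp [List.replicate_succ]
    · rw [Nat.digits_def' hk1 hr0]
      have hlen : (Nat.digits k (r/k)).length + 1 = (Nat.digits k r).length := by
        rw [Nat.digits_def' hk1 hr0]; rfl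
      have hlen2 : (Nat.digits k r).length ≤ ℓ + 1 := digits_len_le_of_lt_pow hk hr
      simp only [List.cons_append, List.append_assoc]
      congr 1
      have : ℓ + 1 - (r % k :: Nat.digits k (r/k)).length = ℓ - (Nat.digits k (r/k)).length := by
        simp [List.length_cons]
      rw [this]


lemma padR_succ {k : ℕ} (hk : 2 ≤ k) (ℓ n : ℕ) (hn : n < k^(ℓ+1)) :
    padR k (ℓ+1) n = (n / k^ℓ) :: padR k ℓ (n % k^ℓ) := by
  have hkl : 0 < k^ℓ := Nat.pow_pos (by omega)
  rcases Nat.eq_zero_or_pos (n / k^ℓ) with hd | hd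
  · have hn' : n < k^ℓ := by
      rcases Nat.lt_or_ge n (k^ℓ) with h | h
      · exact h
      · exfalso; have := Nat.div_pos h hkl; omega
    have hmod : n % k^ℓ = n := Nat.mod_eq_of_lt hn'
    have hlen : (Nat.digits k n).length ≤ ℓ := digits_len_le_of_lt_pow hk hn'
    rw [hd, hmod]
    unfold padR
    have : ℓ + 1 - (Nat.digits k n).length = (ℓ - (Nat.digits k n).length) + 1 := by omega
    rw [this, List.replicate_succ]
    rfl
  · set d := n / k^ℓ with hdd
    set r := n % k^ℓ with hrr
    have hdk : d < k := by
      apply Nat.div_lt_of_lt_mul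
      calc n < k^(ℓ+1) := hn
        _ = k^ℓ * k := pow_succ k ℓ
    have hr : r < k^ℓ := Nat.mod_lt _ hkl
    have hsplit : n = r + d * k^ℓ := (Nat.mod_add_div' n (k^ℓ)).symm
    have hdig := padSplit hk ℓ d r hd hdk hr
    have hlenr : (Nat.digits k r).length ≤ ℓ := digits_len_le_of_lt_pow hk hr
    unfold padR
    rw [hsplit, hdig]
    have hlen : ((Nat.digits k r ++ List.replicate (ℓ - (Nat.digits k r).length) 0) ++ [d]).length
        = ℓ + 1 := by
      simp [List.length_append, List.length_replicate]
      omega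
    rw [hlen]
    simp only [Nat.sub_self, List.replicate_zero, List.nil_append, List.reverse_append,
      List.reverse_cons, List.reverse_nil, List.reverse_replicate]
    simp


/-- The padded automaton: `none` is a start state absorbing leading zeros. -/
def delta' {Q : Type} (δ : Q → ℕ → Q) (q₀ : Q) : Option Q → ℕ → Option Q
  | none, d => if d = 0 then none else some (δ q₀ d)
  | some q, d => some (δ q d)

lemma runA_none_zero {Q : Type} (k : ℕ) (δ : Q → ℕ → Q) (q₀ : Q) :
    ∀ ℓ : ℕ, runA k (delta' δ q₀) ℓ none 0 = none := by
  intro ℓ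
  induction ℓ with
  | zero => rfl
  | succ ℓ ih =>
    show runA k (delta' δ q₀) ℓ (delta' δ q₀ none (0 / k^ℓ)) (0 % k^ℓ) = none
    rw [Nat.zero_div, Nat.zero_mod]
    simpa [delta'] using ih

lemma runA_some {Q : Type} {k : ℕ} (hk : 2 ≤ k) (δ : Q → ℕ → Q) (q₀ : Q) :
    ∀ (ℓ : ℕ) (q : Q) (n : ℕ), n < k^ℓ →
      runA k (delta' δ q₀) ℓ (some q) n = some (List.foldl δ q (padR k ℓ n)) := by
  intro ℓ
  induction ℓ with
  | zero =>
    intro q n hn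
    have : n = 0 := by simpa using hn
    subst this
    simp [runA, padR]
  | succ ℓ ih =>
    intro q n hn
    have hkl : 0 < k^ℓ := Nat.pow_pos (by omega)
    show runA k (delta' δ q₀) ℓ (delta' δ q₀ (some q) (n / k^ℓ)) (n % k^ℓ) = _
    rw [padR_succ hk ℓ n hn]
    show runA k (delta' δ q₀) ℓ (some (δ q (n / k^ℓ))) (n % k^ℓ) = _
    rw [ih _ _ (Nat.mod_lt _ hkl)]
    rfl

lemma runA_none {Q : Type} {k : ℕ} (hk : 2 ≤ k) (δ : Q → ℕ → Q) (q₀ : Q) :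
    ∀ (ℓ : ℕ) (n : ℕ), 0 < n → n < k^ℓ →
      runA k (delta' δ q₀) ℓ none n
        = some (List.foldl δ q₀ (Nat.digits k n).reverse) := by
  intro ℓ
  induction ℓ with
  | zero =>
    intro n hn0 hn
    simp at hn
    omega
  | succ ℓ ih =>
    intro n hn0 hn
    have hkl : 0 < k^ℓ := Nat.pow_pos (by omega)
    show runA k (delta' δ q₀) ℓ (delta' δ q₀ none (n / k^ℓ)) (n % k^ℓ) = _
    rcases Nat.eq_zero_or_pos (n / k^ℓ) with hd | hd
    · have hn' : n < k^ℓ := by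
        rcases Nat.lt_or_ge n (k^ℓ) with h | h
        · exact h
        · exfalso; have := Nat.div_pos h hkl; omega
      rw [hd, Nat.mod_eq_of_lt hn']
      show runA k (delta' δ q₀) ℓ (if (0:ℕ) = 0 then none else some (δ q₀ 0)) n = _
      rw [if_pos rfl]
      exact ih n hn0 hn'
    · set d := n / k^ℓ with hdd
      set r := n % k^ℓ with hrr
      have hdk : d < k := by
        apply Nat.div_lt_of_lt_mul
        calc n < k^(ℓ+1) := hn
          _ = k^ℓ * k := pow_succ k ℓ
      have hr : r < k^ℓ := Nat.mod_lt _ hkl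
      have hsplit : n = r + d * k^ℓ := (Nat.mod_add_div' n (k^ℓ)).symm
      have hdig := padSplit hk ℓ d r hd hdk hr
      have hrev : (Nat.digits k n).reverse = d :: padR k ℓ r := by
        rw [hsplit, hdig]
        simp only [List.reverse_append, List.reverse_cons, List.reverse_nil,
          List.reverse_replicate, List.nil_append, padR]
        simp
      rw [hrev]
      show runA k (delta' δ q₀) ℓ (if d = 0 then none else some (δ q₀ d)) r = _
      rw [if_neg (by omega)]
      rw [runA_some hk δ q₀ ℓ (δ q₀ d) r hr]
      rfl


lemma piCount_eq_card (S : Set ℕ) [DecidablePred (· ∈ S)] (N : ℕ) :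
    piCount S N = ((Finset.range N).filter (fun n => n ∈ S)).card := by
  have h : S ∩ Set.Iio N = ↑((Finset.range N).filter (fun n => n ∈ S)) := by
    ext n
    simp [Set.mem_Iio, and_comm]
  rw [piCount, h, Set.ncard_coe_finset]

lemma piCount_mono (S : Set ℕ) {M N : ℕ} (h : M ≤ N) : piCount S M ≤ piCount S N :=
  Set.ncard_le_ncard (Set.inter_subset_inter_right _ (Set.Iio_subset_Iio h))
    ((Set.finite_Iio N).inter_of_right _)

lemma piCount_le (S : Set ℕ) (N : ℕ) : piCount S N ≤ N := by
  classical
  calc piCount S N ≤ ((Finset.range N).filter (fun n => n ∈ S)).card := le_of_eq (piCount_eq_card S N)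
    _ ≤ (Finset.range N).card := Finset.card_filter_le _ _
    _ = N := Finset.card_range N

theorem liminf_zero_imp_limsup_zero
    (k : ℕ) (hk : 2 ≤ k) (S : Set ℕ) (hS : IsAutomaticSet k S)
    (h0 : Filter.atTop.liminf (fun N : ℕ => (piCount S N : ℝ) / N) = 0) :
    Filter.atTop.limsup (fun N : ℕ => (piCount S N : ℝ) / N) = 0 := by
  classical
  obtain ⟨Q, instF, q₀, δ, τ, hτ⟩ := hS
  have hk1 : 1 < k := by omega
  have hk0 : 0 < k := by omega
  set δ' : Option Q → ℕ → Option Q := delta' δ q₀ with hδ'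
  set acc : Option Q → Bool := fun q => decide (q.elim (τ q₀) τ = 1) with hacc
  -- value of τ at the state reached by `n` decides membership
  have hval : ∀ n : ℕ, (τ (List.foldl δ q₀ (Nat.digits k n).reverse) = 1 ↔ n ∈ S) := by
    intro n
    have h := hτ n
    by_cases hnS : n ∈ S
    · rw [Set.indicator_of_mem hnS] at h
      exact ⟨fun _ => hnS, fun _ => h.symm⟩
    · rw [Set.indicator_of_notMem hnS] at h
      constructor
      · intro h1
        omega
      · intro h1; exact absurd h1 hnS
  have hmem : ∀ m n : ℕ, n < k^m → (acc (runA k δ' m none n) = true ↔ n ∈ S) := by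
    intro m n hn
    rcases Nat.eq_zero_or_pos n with rfl | hn0
    · rw [hδ', runA_none_zero k δ q₀ m]
      simp only [hacc, Option.elim, decide_eq_true_eq]
      have := hval 0
      exact decide_eq_true_iff.trans (by simpa using this)
    · rw [hδ', runA_none hk δ q₀ m n hn0 hn]
      simp only [hacc, Option.elim, decide_eq_true_eq]
      exact decide_eq_true_iff.trans (hval n)
  -- the count function computes piCount at powers of k
  have hcnt : ∀ m : ℕ, cntA k δ' acc m none = piCount S (k^m) := by
    intro m
    rw [cntA_card k δ' acc hk0 m none, piCount_eq_card S (k^m)]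
    congr 1
    apply Finset.filter_congr
    intro n hn
    have := hmem m n (Finset.mem_range.1 hn)
    simp only [this]
  -- reachable-state sets, pigeonhole for eventual periodicity
  set RS : ℕ → Set (Option Q) := fun t => {q | ∃ n, n < k^t ∧ runA k δ' t none n = q} with hRS
  obtain ⟨a, b, hab, habeq⟩ := Finite.exists_ne_map_eq_of_infinite RS
  obtain ⟨t₀, t₁, ht01, heq⟩ : ∃ t₀ t₁ : ℕ, t₀ < t₁ ∧ RS t₀ = RS t₁ := by
    rcases Nat.lt_or_ge a b with h | h
    · exact ⟨a, b, h, habeq⟩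
    · exact ⟨b, a, by omega, habeq.symm⟩
  set p := t₁ - t₀ with hp
  have hp0 : 0 < p := by omega
  have ht1 : t₁ = t₀ + p := by omega
  -- closure of reachable sets under one step
  have hstep : ∀ t (q : Option Q) d, q ∈ RS t → d < k → δ' q d ∈ RS (t+1) := by
    intro t q d hq hd
    obtain ⟨n, hn, rfl⟩ := hq
    refine ⟨n * k + d, ?_, ?_⟩
    · have h1 : (n+1) * k ≤ k^t * k := Nat.mul_le_mul_right k hn
      calc n * k + d < (n+1) * k := by nlinarith
        _ ≤ k^t * k := h1
        _ = k^(t+1) := (pow_succ k t).symm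
    · exact runA_append k δ' hk0 t none n d hn hd
  -- the normalized counting function tends to zero
  set f : ℕ → ℝ := fun N => (piCount S N : ℝ) / N with hf
  have hf0 : ∀ N, 0 ≤ f N := fun N => by positivity
  have hf1 : ∀ N, f N ≤ 1 := by
    intro N
    rcases Nat.eq_zero_or_pos N with rfl | hN
    · simp [hf]
    · rw [hf]
      rw [div_le_one (by exact_mod_cast hN)]
      exact_mod_cast piCount_le S N
  have htend : Filter.Tendsto f Filter.atTop (nhds 0) := by
    rw [tendsto_order]
    constructor
    · intro γ hγ
      filter_upwards with N
      exact lt_of_lt_of_le hγ (hf0 N)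
    · intro γ hγ
      set C : ℝ := (k:ℝ)^(t₀+p+1) with hC
      have hCpos : 0 < C := by positivity
      set ε : ℝ := γ / (2*C) with hε
      have hεpos : 0 < ε := by positivity
      have hcobdd : Filter.atTop.IsCoboundedUnder (· ≥ ·) f :=
        (Filter.isBoundedUnder_of ⟨(1:ℝ), fun N => hf1 N⟩).isCoboundedUnder_ge
      have hfreq : ∃ᶠ N in Filter.atTop, f N < ε :=
        Filter.frequently_lt_of_liminf_lt hcobdd (by rw [h0]; exact hεpos)
      obtain ⟨N, hNlt, hNge⟩ :=
        (hfreq.and_eventually (Filter.eventually_ge_atTop (k^(t₀+p)))).exists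
      have hN0 : 0 < N := lt_of_lt_of_le (Nat.pow_pos hk0) hNge
      set m := Nat.log k N with hm
      have hmge : t₀ + p ≤ m := (Nat.le_log_iff_pow_le hk1 (by omega)).2 hNge
      have hkmN : k^m ≤ N := Nat.pow_log_le_self k (by omega)
      have hNub : N < k^(m+1) := Nat.lt_pow_succ_log_self hk1 N
      have hπN : (piCount S N : ℝ) < ε * N := by
        rw [hf, div_lt_iff₀ (by exact_mod_cast hN0)] at hNlt
        linarith [hNlt]
      set B : ℝ := ε * (k:ℝ)^(t₀+p) with hB
      have hBpos : 0 < B := by positivity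
      set F : ℕ → Prop := fun ℓ => ∀ q ∈ RS t₀, (cntA k δ' acc ℓ q : ℝ) ≤ B * (k:ℝ)^ℓ with hF
      -- one-step propagation (along RS-indices)
      have hii : ∀ (ℓ t : ℕ), (∀ q ∈ RS (t+1), (cntA k δ' acc ℓ q : ℝ) ≤ B * (k:ℝ)^ℓ) →
          (∀ q ∈ RS t, (cntA k δ' acc (ℓ+1) q : ℝ) ≤ B * (k:ℝ)^(ℓ+1)) := by
        intro ℓ t hprev q hq
        have hrec : cntA k δ' acc (ℓ+1) q = ∑ d ∈ Finset.range k, cntA k δ' acc ℓ (δ' q d) := rfl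
        rw [hrec]
        push_cast
        calc (∑ d ∈ Finset.range k, (cntA k δ' acc ℓ (δ' q d) : ℝ))
            ≤ ∑ _d ∈ Finset.range k, B * (k:ℝ)^ℓ := by
              refine Finset.sum_le_sum fun d hd => ?_
              exact hprev _ (hstep t q d hq (Finset.mem_range.1 hd))
          _ = (k:ℝ) * (B * (k:ℝ)^ℓ) := by rw [Finset.sum_const, Finset.card_range]; ring
          _ = B * (k:ℝ)^(ℓ+1) := by ring
      have hiter : ∀ (r ℓ t : ℕ), (∀ q ∈ RS (t+r), (cntA k δ' acc ℓ q : ℝ) ≤ B * (k:ℝ)^ℓ) →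
          (∀ q ∈ RS t, (cntA k δ' acc (ℓ+r) q : ℝ) ≤ B * (k:ℝ)^(ℓ+r)) := by
        intro r
        induction r with
        | zero => intro ℓ t h; exact h
        | succ r ih =>
          intro ℓ t h
          have h' : ∀ q ∈ RS ((t+1)+r), (cntA k δ' acc ℓ q : ℝ) ≤ B * (k:ℝ)^ℓ := by
            have : (t+1)+r = t+(r+1) := by omega
            rw [this]; exact h
          have := hii (ℓ+r) t (ih ℓ (t+1) h')
          have he : ℓ + (r+1) = (ℓ+r)+1 := by omega
          rw [he]
          exact this
      -- base cases from the small density at N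
      have hbase : ∀ j, j < p → F (m - j - t₀) := by
        intro j hj q hq
        obtain ⟨n, hn, rfl⟩ := hq
        have h1 : cntA k δ' acc (m-j-t₀) (runA k δ' t₀ none n) ≤ cntA k δ' acc (t₀ + (m-j-t₀)) none :=
          cntA_reach_le k δ' acc hk0 t₀ none (m-j-t₀) n hn
        have he : t₀ + (m-j-t₀) = m - j := by omega
        rw [he, hcnt] at h1
        have h2 : piCount S (k^(m-j)) ≤ piCount S N :=
          piCount_mono S (le_trans (Nat.pow_le_pow_right hk0 (by omega)) hkmN)
        have h3 : (cntA k δ' acc (m-j-t₀) (runA k δ' t₀ none n) : ℝ) < ε * N := by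
          calc (cntA k δ' acc (m-j-t₀) (runA k δ' t₀ none n) : ℝ)
              ≤ (piCount S N : ℝ) := by exact_mod_cast le_trans h1 h2
            _ < ε * N := hπN
        have h4 : (N:ℝ) ≤ (k:ℝ)^(m+1) := by
          have : (N:ℝ) ≤ ((k^(m+1) : ℕ) : ℝ) := by exact_mod_cast Nat.le_of_lt hNub
          rwa [Nat.cast_pow] at this
        have h5 : (k:ℝ)^(m+1) ≤ (k:ℝ)^(t₀+p) * (k:ℝ)^(m-j-t₀) := by
          rw [← pow_add]
          apply pow_le_pow_right₀ (by exact_mod_cast hk1.le)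
          omega
        refine le_of_lt ?_
        calc (cntA k δ' acc (m-j-t₀) (runA k δ' t₀ none n) : ℝ)
            < ε * N := h3
          _ ≤ ε * (k:ℝ)^(m+1) := mul_le_mul_of_nonneg_left h4 hεpos.le
          _ ≤ ε * ((k:ℝ)^(t₀+p) * (k:ℝ)^(m-j-t₀)) := by
              exact mul_le_mul_of_nonneg_left h5 hεpos.le
          _ = B * (k:ℝ)^(m-j-t₀) := by rw [hB]; ring
      -- the chain: propagate each base case by multiples of p
      have hchain : ∀ j, j < p → ∀ aa : ℕ, F (m - j - t₀ + aa * p) := by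
        intro j hj a
        induction a with
        | zero => simpa using hbase j hj
        | succ a ih =>
          have ih' : ∀ q ∈ RS t₁, (cntA k δ' acc (m-j-t₀+a*p) q : ℝ)
              ≤ B * (k:ℝ)^(m-j-t₀+a*p) := by
            rw [← heq]; exact ih
          have ih'' : ∀ q ∈ RS (t₀+p), (cntA k δ' acc (m-j-t₀+a*p) q : ℝ)
              ≤ B * (k:ℝ)^(m-j-t₀+a*p) := by rw [← ht1]; exact ih'
          have := hiter p (m-j-t₀+a*p) t₀ ih''
          have he : m - j - t₀ + (a+1) * p = (m-j-t₀+a*p) + p := by ring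
          rw [hF, he]
          exact this
      -- every large index is covered
      have hall : ∀ ℓ, m - t₀ ≤ ℓ → F ℓ := by
        intro ℓ hℓ
        set D := ℓ - (m - t₀) with hD
        obtain ⟨E, hE⟩ : ∃ E, E = D / p * p := ⟨_, rfl⟩
        obtain ⟨r, hr⟩ : ∃ r, r = D % p := ⟨_, rfl⟩
        have h2 : E + r = D := by rw [hE, hr]; exact Nat.div_add_mod' D p
        have hrlt : r < p := by rw [hr]; exact Nat.mod_lt _ hp0
        rcases Nat.eq_zero_or_pos r with hr0 | hr0
        · have hEq : E = D := by omega
          have := hchain 0 hp0 (D / p)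
          rw [← hE, hEq] at this
          have he : m - 0 - t₀ + D = ℓ := by omega
          rwa [he] at this
        · have := hchain (p - r) (by omega) (D / p + 1)
          have hmul : (D / p + 1) * p = E + p := by rw [add_mul, one_mul, ← hE]
          rw [hmul] at this
          have he : m - (p - r) - t₀ + (E + p) = ℓ := by omega
          rwa [he] at this
      -- bound piCount at all powers k^{m'} for m' ≥ m
      have hfinal : ∀ m', m ≤ m' → (piCount S (k^m') : ℝ) ≤ B * (k:ℝ)^(m'+1-1) := by
        intro m' hm'
        have h1 : ∀ n, n < k^t₀ →
            (cntA k δ' acc (m'-t₀) (runA k δ' t₀ none n) : ℝ) ≤ B * (k:ℝ)^(m'-t₀) := by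
          intro n hn
          exact hall (m'-t₀) (Nat.sub_le_sub_right hm' t₀) _ ⟨n, hn, rfl⟩
        have h2 := cntA_sum_le k δ' acc t₀ none (m'-t₀) (B * (k:ℝ)^(m'-t₀)) h1
        have he : t₀ + (m'-t₀) = m' :=
          Nat.add_sub_cancel' (le_trans (Nat.le_add_right t₀ p) (le_trans hmge hm'))
        rw [he, hcnt] at h2
        calc (piCount S (k^m') : ℝ) ≤ (k:ℝ)^t₀ * (B * (k:ℝ)^(m'-t₀)) := h2
          _ = B * ((k:ℝ)^t₀ * (k:ℝ)^(m'-t₀)) := by ring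
          _ = B * (k:ℝ)^(m'+1-1) := by rw [← pow_add, he]; norm_num
      -- conclude: all large N have small density
      have hfin : ∀ M, k^m ≤ M → f M < γ := by
        intro M hM
        have hM0 : 0 < M := lt_of_lt_of_le (Nat.pow_pos hk0) hM
        set m'' := Nat.log k M with hm''
        have hm2 : m ≤ m'' :=
          (Nat.le_log_iff_pow_le hk1 (by omega : M ≠ 0)).2 hM
        have hMub : M < k^(m''+1) := Nat.lt_pow_succ_log_self hk1 M
        have hMlb : k^m'' ≤ M := Nat.pow_log_le_self k (by omega)
        have h1 : (piCount S M : ℝ) ≤ B * (k:ℝ)^(m''+1+1-1) := by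
          calc (piCount S M : ℝ) ≤ (piCount S (k^(m''+1)) : ℝ) := by
                exact_mod_cast piCount_mono S (Nat.le_of_lt hMub)
            _ ≤ B * (k:ℝ)^(m''+1+1-1) := hfinal (m''+1) (by omega)
        have h2 : (k:ℝ)^(m''+1+1-1) = (k:ℝ) * (k:ℝ)^m'' := by
          have : m''+1+1-1 = m''+1 := by omega
          rw [this, pow_succ]; ring
        have h3 : ((k:ℝ))^m'' ≤ (M:ℝ) := by exact_mod_cast hMlb
        have h4 : (piCount S M : ℝ) ≤ B * (k:ℝ) * M := by
          rw [h2] at h1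
          calc (piCount S M : ℝ) ≤ B * ((k:ℝ) * (k:ℝ)^m'') := h1
            _ ≤ B * ((k:ℝ) * M) := by
                apply mul_le_mul_of_nonneg_left _ hBpos.le
                exact mul_le_mul_of_nonneg_left h3 (by positivity)
            _ = B * (k:ℝ) * M := by ring
        have h5 : f M ≤ B * (k:ℝ) := by
          rw [hf, div_le_iff₀ (by exact_mod_cast hM0)]
          exact h4
        have h6 : B * (k:ℝ) = ε * C := by
          rw [hB, hC, pow_succ]; ring
        have h7 : ε * C = γ / 2 := by
          rw [hε]
          field_simp
        calc f M ≤ B * (k:ℝ) := h5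
          _ = γ / 2 := by rw [h6, h7]
          _ < γ := by linarith
      filter_upwards [Filter.eventually_ge_atTop (k^m)] with M hM
      exact hfin M hM
  exact htend.limsup_eq
end
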